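/- arXiv:2110.03288 — 4 statements merged into one kernel-verified Lean document; each statement's English description precedes it below -/
import Mathlib

section
/- Let σ ∈ (1/2, 1) be fixed. There exists a constant C(σ) such that for every real k ≥ 2 and every prime p with p ≤ k^{1/σ}, one has Σ_{ν ≥ 0} d_{k/2}(p^ν)²/p^{2νσ} = exp(θ) for some real θ with |θ| ≤ C(σ)·k/p^{σ}. -/
open MeasureTheory Real

/-- The generalized divisor function at prime powers:
`d_z(p^ν) = Γ(z+ν)/(Γ(z) ν!)`. -/
noncomputable def dzPow (z : ℝ) (ν : ℕ) : ℝ :=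
  Real.Gamma (z + ν) / (Real.Gamma z * Nat.factorial ν)

lemma dzPow_zero (z : ℝ) (hz : 0 < z) : dzPow z 0 = 1 := by
  have := Real.Gamma_pos_of_pos hz
  simp [dzPow, this.ne']

lemma dzPow_succ (z : ℝ) (hz : 0 < z) (ν : ℕ) :
    dzPow z (ν + 1) = dzPow z ν * ((z + ν) / (ν + 1)) := by
  have hG : Real.Gamma (z + (ν + 1 : ℕ)) = (z + ν) * Real.Gamma (z + ν) := by
    push_cast
    rw [show z + ((ν : ℝ) + 1) = (z + ν) + 1 by ring, Real.Gamma_add_one (by positivity)]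
  have hGz : Real.Gamma z ≠ 0 := (Real.Gamma_pos_of_pos hz).ne'
  have hfac : ((ν + 1).factorial : ℝ) = ((ν : ℝ) + 1) * (ν.factorial : ℝ) := by
    rw [Nat.factorial_succ]; push_cast; ring
  rw [dzPow, dzPow, hG, hfac]
  have h1 : (ν.factorial : ℝ) ≠ 0 := by positivity
  have h2 : (ν : ℝ) + 1 ≠ 0 := by positivity
  field_simp

lemma dzPow_nonneg (z : ℝ) (hz : 0 < z) (ν : ℕ) : 0 ≤ dzPow z ν := by
  induction ν with
  | zero => rw [dzPow_zero z hz]; norm_num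
  | succ n ih =>
      rw [dzPow_succ z hz n]
      have : 0 ≤ (z + n) / (n + 1) := by positivity
      exact mul_nonneg ih this

lemma dzPow_mono (z w : ℝ) (hz : 0 < z) (hw : z ≤ w) (ν : ℕ) :
    dzPow z ν ≤ dzPow w ν := by
  have hw0 : 0 < w := lt_of_lt_of_le hz hw
  induction ν with
  | zero => rw [dzPow_zero z hz, dzPow_zero w hw0]
  | succ n ih =>
      rw [dzPow_succ z hz n, dzPow_succ w hw0 n]
      apply mul_le_mul ih _ (by positivity) (dzPow_nonneg w hw0 n)
      gcongr

lemma dzPow_nat (m : ℕ) (ν : ℕ) :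
    dzPow ((m : ℝ) + 1) ν = ((ν + m).choose m : ℝ) := by
  rw [dzPow]
  have h1 : (m : ℝ) + 1 + ν = ((m + ν : ℕ) : ℝ) + 1 := by push_cast; ring
  rw [h1, Real.Gamma_nat_eq_factorial, show ((m:ℝ) + 1) = ((m:ℕ):ℝ) + 1 by norm_num,
    Real.Gamma_nat_eq_factorial]
  rw [Nat.cast_choose ℝ (show m ≤ ν + m by omega), show ν + m - m = ν by omega,
    show m + ν = ν + m by omega]

theorem stmt5 (σ : ℝ) (hσ : 1/2 < σ) (hσ1 : σ < 1) :
    ∃ C > (0:ℝ), ∀ k : ℝ, 2 ≤ k → ∀ p : ℕ, p.Prime → (p:ℝ) ≤ k ^ (1/σ) →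
      ∃ θ : ℝ, |θ| ≤ C * k / (p:ℝ) ^ σ ∧
        (∑' ν : ℕ, dzPow (k/2) ν ^ 2 / (p:ℝ) ^ (2*(ν:ℝ)*σ)) = Real.exp θ := by
  refine ⟨8, by norm_num, fun k hk p hp hple => ?_⟩
  have hσ0 : 0 < σ := by linarith
  set z : ℝ := k / 2 with hzdef
  have hz1 : 1 ≤ z := by rw [hzdef]; linarith
  have hz0 : 0 < z := by linarith
  have hp2 : (2 : ℝ) ≤ (p : ℝ) := by exact_mod_cast hp.two_le
  have hp0 : (0 : ℝ) < (p : ℝ) := by linarith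
  set y : ℝ := (p : ℝ) ^ (-σ) with hydef
  have hy0 : 0 < y := Real.rpow_pos_of_pos hp0 _
  -- y ≤ 3/4
  have h2σ : (4/3 : ℝ) ≤ (2 : ℝ) ^ σ := by
    have h12 : (2:ℝ) ^ (1/2 : ℝ) ≤ (2:ℝ) ^ σ :=
      Real.rpow_le_rpow_of_exponent_le (by norm_num) (le_of_lt hσ)
    have hsq : ((2:ℝ) ^ (1/2 : ℝ)) ^ (2:ℕ) = 2 := by
      rw [← Real.rpow_natCast ((2:ℝ) ^ (1/2:ℝ)) 2, ← Real.rpow_mul (by norm_num)]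
      norm_num
    have hpos : (0:ℝ) ≤ (2:ℝ) ^ (1/2 : ℝ) := le_of_lt (Real.rpow_pos_of_pos (by norm_num) _)
    nlinarith [hsq, hpos, h12]
  have hy34 : y ≤ 3/4 := by
    have h1 : (2:ℝ) ^ σ ≤ (p:ℝ) ^ σ := Real.rpow_le_rpow (by norm_num) hp2 (le_of_lt hσ0)
    have h2 : (4/3 : ℝ) ≤ (p:ℝ) ^ σ := le_trans h2σ h1
    have h3 : y = ((p:ℝ) ^ σ)⁻¹ := by rw [hydef, Real.rpow_neg (le_of_lt hp0)]
    rw [h3]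
    rw [inv_le_comm₀ (by linarith) (by norm_num)]
    linarith
  have hy1 : y < 1 := lt_of_le_of_lt hy34 (by norm_num)
  have h1y : (0:ℝ) < 1 - y := by linarith
  -- ceiling
  set m : ℕ := ⌈z⌉₊ with hmdef
  have hm1 : 1 ≤ m := Nat.one_le_ceil_iff.mpr hz0
  obtain ⟨j, hj⟩ : ∃ j, m = j + 1 := ⟨m - 1, by omega⟩
  have hmj : ((m : ℕ) : ℝ) = (j : ℝ) + 1 := by rw [hj]; push_cast; ring
  have hzj : z ≤ (j : ℝ) + 1 := by
    have h := Nat.le_ceil z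
    rw [← hmdef] at h
    linarith [hmj ▸ h]
  have hjz : (j : ℝ) + 1 ≤ z + 1 := by
    have h := Nat.ceil_lt_add_one (le_of_lt hz0)
    rw [← hmdef] at h
    linarith [hmj ▸ h]
  -- the sequences
  set b : ℕ → ℝ := fun ν => dzPow z ν * y ^ ν with hbdef
  have hbnn : ∀ ν, 0 ≤ b ν := fun ν =>
    mul_nonneg (dzPow_nonneg z hz0 ν) (pow_nonneg (le_of_lt hy0) ν)
  have hb0 : b 0 = 1 := by simp [hbdef, dzPow_zero z hz0]
  have hynorm : ‖y‖ < 1 := by rw [Real.norm_eq_abs, abs_of_pos hy0]; exact hy1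
  have hchoose : HasSum (fun ν : ℕ => ((ν + j).choose j : ℝ) * y ^ ν)
      (1 / (1 - y) ^ (j + 1)) := hasSum_choose_mul_geometric_of_norm_lt_one j hynorm
  have hble : ∀ ν, b ν ≤ ((ν + j).choose j : ℝ) * y ^ ν := by
    intro ν
    rw [hbdef]
    apply mul_le_mul_of_nonneg_right _ (pow_nonneg (le_of_lt hy0) ν)
    calc dzPow z ν ≤ dzPow ((j : ℝ) + 1) ν := dzPow_mono z _ hz0 hzj ν
      _ = ((ν + j).choose j : ℝ) := dzPow_nat j ν
  have hbsum : Summable b :=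
    Summable.of_nonneg_of_le hbnn hble hchoose.summable
  set B : ℝ := ∑' ν, b ν with hBdef
  have hB_le : B ≤ 1 / (1 - y) ^ (j + 1) := by
    rw [hBdef, ← hchoose.tsum_eq]
    exact Summable.tsum_le_tsum hble hbsum hchoose.summable
  have hbB : ∀ ν, b ν ≤ B := fun ν => Summable.le_tsum hbsum ν (fun _ _ => hbnn _)
  have hsq_le : ∀ ν, b ν ^ 2 ≤ b ν * B := by
    intro ν
    rw [sq]
    exact mul_le_mul_of_nonneg_left (hbB ν) (hbnn ν)
  have hsq_sum : Summable (fun ν => b ν ^ 2) :=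
    Summable.of_nonneg_of_le (fun ν => sq_nonneg _) hsq_le (hbsum.mul_right B)
  set S : ℝ := ∑' ν, b ν ^ 2 with hSdef
  have hS_le : S ≤ B * B := by
    calc S ≤ ∑' ν, b ν * B := Summable.tsum_le_tsum hsq_le hsq_sum (hbsum.mul_right B)
      _ = B * B := by rw [tsum_mul_right]
  have hS1 : 1 ≤ S := by
    have := Summable.le_tsum hsq_sum 0 (fun _ _ => sq_nonneg _)
    rw [hb0] at this
    simpa using this
  have hS0 : 0 < S := by linarith
  have hB0 : 0 ≤ B := le_trans (hbnn 0) (hbB 0)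
  -- tsum in statement equals S
  have hterm : ∀ ν : ℕ, dzPow (k/2) ν ^ 2 / (p:ℝ) ^ (2*(ν:ℝ)*σ) = b ν ^ 2 := by
    intro ν
    rw [hbdef, mul_pow]
    have hyν : y ^ ν = (p:ℝ) ^ ((-σ) * ν) := by
      rw [hydef, ← Real.rpow_natCast ((p:ℝ) ^ (-σ)) ν, ← Real.rpow_mul (le_of_lt hp0)]
    rw [hyν, ← Real.rpow_natCast ((p:ℝ) ^ ((-σ) * ν)) 2, ← Real.rpow_mul (le_of_lt hp0)]
    rw [div_eq_mul_inv, ← Real.rpow_neg (le_of_lt hp0)]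
    norm_num
    rw [show -(2 * (ν:ℝ) * σ) = -(σ * ν * 2) by ring]
  -- conclude
  refine ⟨Real.log S, ?_, ?_⟩
  · rw [abs_of_nonneg (Real.log_nonneg hS1)]
    -- log S ≤ 2(j+1) * (-log (1-y)) ≤ 8 k y
    have hT : (0:ℝ) < (1 - y) ^ (j + 1) := pow_pos h1y _
    have hBB : B * B ≤ (1 / (1 - y) ^ (j + 1)) * (1 / (1 - y) ^ (j + 1)) :=
      mul_le_mul hB_le hB_le hB0 (by positivity)
    have hlogS : Real.log S ≤ Real.log ((1 / (1 - y) ^ (j + 1)) * (1 / (1 - y) ^ (j + 1))) :=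
      Real.log_le_log hS0 (le_trans hS_le hBB)
    have hlog1 : Real.log ((1 / (1 - y) ^ (j + 1)) * (1 / (1 - y) ^ (j + 1)))
        = 2 * ((j : ℝ) + 1) * (-Real.log (1 - y)) := by
      rw [Real.log_mul (by positivity) (by positivity), one_div, Real.log_inv,
        Real.log_pow]
      push_cast
      ring
    have hlogy : -Real.log (1 - y) ≤ 4 * y := by
      have h := Real.log_le_sub_one_of_pos (show (0:ℝ) < (1 - y)⁻¹ by positivity)
      rw [Real.log_inv] at h
      have h2 : (1 - y)⁻¹ - 1 ≤ 4 * y := by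
        rw [inv_eq_one_div, div_sub' (ne_of_gt h1y)]
        rw [div_le_iff₀ h1y]
        nlinarith
      linarith
    have hjk : 2 * ((j:ℝ) + 1) ≤ 2 * k := by
      have : z + 1 ≤ k := by rw [hzdef]; linarith
      linarith
    have hstep : Real.log S ≤ 8 * k * y := by
      calc Real.log S ≤ 2 * ((j : ℝ) + 1) * (-Real.log (1 - y)) := by rw [← hlog1]; exact hlogS
        _ ≤ 2 * ((j : ℝ) + 1) * (4 * y) := by
            apply mul_le_mul_of_nonneg_left hlogy (by positivity)
        _ ≤ 2 * k * (4 * y) := by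
            apply mul_le_mul_of_nonneg_right hjk (by positivity)
        _ = 8 * k * y := by ring
    have hyeq : y = ((p:ℝ) ^ σ)⁻¹ := by rw [hydef, Real.rpow_neg (le_of_lt hp0)]
    rw [div_eq_mul_inv, ← hyeq]
    linarith
  · rw [Real.exp_log hS0, hSdef]
    exact tsum_congr hterm
end

section
/- Let σ ∈ (1/2, 1) be fixed. Then for all real 2 ≤ y ≤ z, all T ≥ 2, and all integers k with 1 ≤ k ≤ (log T)/(3 log z), one has (1/T)∫_T^{2T} | Σ_{y ≤ p ≤ z, p prime} p^{−σ−it} |^{2k} dt ≪ ( k·Σ_{y ≤ p ≤ z, p prime} p^{−2σ} )^{k} + T^{−1/3}, where the implied constant depends at most on σ. -/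
open MeasureTheory Real

namespace Stmt10
open Finset

lemma term_eq (σ t : ℝ) (p : ℕ) (hp : 0 < p) :
    (p:ℂ) ^ (-((σ:ℂ) + (t:ℂ) * Complex.I)) =
      (((p:ℝ) ^ (-σ) : ℝ) : ℂ) * Complex.exp (((-(t * Real.log p)) : ℝ) * Complex.I) := by
  have hp0 : (p:ℂ) ≠ 0 := by exact_mod_cast hp.ne'
  have hpr : (0:ℝ) < (p:ℝ) := by exact_mod_cast hp
  rw [Complex.cpow_def_of_ne_zero hp0]
  have hlog : Complex.log (p:ℂ) = ((Real.log (p:ℝ) : ℝ) : ℂ) := by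
    rw [← Complex.ofReal_natCast, Complex.ofReal_log hpr.le]
  rw [hlog, Real.rpow_def_of_pos hpr, Complex.ofReal_exp, ← Complex.exp_add]
  congr 1
  push_cast
  ring

lemma pow_k_eq (σ t : ℝ) (k : ℕ) (P : Finset ℕ) (hP : ∀ p ∈ P, 0 < p) :
    (∑ p ∈ P, (p:ℂ) ^ (-((σ:ℂ) + (t:ℂ) * Complex.I))) ^ k
    = ∑ f ∈ Fintype.piFinset (fun _ : Fin k => P),
        ((∏ i, ((f i:ℝ)) ^ (-σ) : ℝ) : ℂ) *
          Complex.exp (((-(t * Real.log ((∏ i, f i : ℕ) : ℝ))) : ℝ) * Complex.I) := by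
  have h1 : (∑ p ∈ P, (p:ℂ) ^ (-((σ:ℂ) + (t:ℂ) * Complex.I)))
      = ∑ p ∈ P, (((p:ℝ) ^ (-σ) : ℝ) : ℂ) * Complex.exp (((-(t * Real.log p)) : ℝ) * Complex.I) :=
    Finset.sum_congr rfl fun p hp => term_eq σ t p (hP p hp)
  have hk : (∑ p ∈ P, (((p:ℝ) ^ (-σ) : ℝ) : ℂ) * Complex.exp (((-(t * Real.log p)) : ℝ) * Complex.I)) ^ k
      = ∏ _i : Fin k, ∑ p ∈ P, (((p:ℝ) ^ (-σ) : ℝ) : ℂ) * Complex.exp (((-(t * Real.log p)) : ℝ) * Complex.I) := by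
    rw [Finset.prod_const, Finset.card_fin]
  rw [h1, hk, Finset.prod_univ_sum]
  refine Finset.sum_congr rfl fun f hf => ?_
  have hf' : ∀ i, 0 < f i := fun i => hP _ ((Fintype.mem_piFinset.mp hf) i)
  rw [Finset.prod_mul_distrib, ← Complex.exp_sum, ← Finset.sum_mul]
  have hlog : Real.log ((∏ i, f i : ℕ) : ℝ) = ∑ i, Real.log ((f i : ℕ) : ℝ) := by
    push_cast
    exact Real.log_prod (fun i _ => by exact_mod_cast (hf' i).ne')
  rw [hlog]
  push_cast
  rw [Finset.mul_sum, ← Finset.sum_neg_distrib]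

lemma expand (σ t : ℝ) (k : ℕ) (P : Finset ℕ) (hP : ∀ p ∈ P, 0 < p) :
    (‖∑ p ∈ P, (p:ℂ) ^ (-((σ:ℂ) + (t:ℂ) * Complex.I))‖) ^ (2*k)
    = ∑ f ∈ Fintype.piFinset (fun _ : Fin k => P),
        ∑ g ∈ Fintype.piFinset (fun _ : Fin k => P),
        ((∏ i, ((f i:ℝ)) ^ (-σ)) * (∏ i, ((g i:ℝ)) ^ (-σ))) *
          Real.cos ((Real.log ((∏ i, g i : ℕ) : ℝ) - Real.log ((∏ i, f i : ℕ) : ℝ)) * t) := by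
  have hpk := pow_k_eq σ t k P hP
  set S := ∑ p ∈ P, (p:ℂ) ^ (-((σ:ℂ) + (t:ℂ) * Complex.I)) with hS
  have h2 : ‖S‖ ^ (2*k) = (S^k * (starRingEnd ℂ) (S^k)).re := by
    rw [Complex.mul_conj, Complex.ofReal_re, map_pow, ← Complex.sq_norm, ← pow_mul]
  rw [h2, hpk, map_sum, Finset.sum_mul_sum, Complex.re_sum]
  refine Finset.sum_congr rfl fun f hf => ?_
  rw [Complex.re_sum]
  refine Finset.sum_congr rfl fun g hg => ?_
  rw [map_mul, Complex.conj_ofReal, ← Complex.exp_conj, map_mul, Complex.conj_ofReal, Complex.conj_I]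
  have : (((∏ i, ((f i:ℝ)) ^ (-σ) : ℝ)) : ℂ) * Complex.exp (((-(t * Real.log ((∏ i, f i : ℕ) : ℝ))) : ℝ) * Complex.I) *
      ((((∏ i, ((g i:ℝ)) ^ (-σ) : ℝ)) : ℂ) * Complex.exp (((-(t * Real.log ((∏ i, g i : ℕ) : ℝ))) : ℝ) * -Complex.I))
      = (((∏ i, ((f i:ℝ)) ^ (-σ)) * (∏ i, ((g i:ℝ)) ^ (-σ)) : ℝ) : ℂ) *
        Complex.exp ((((Real.log ((∏ i, g i : ℕ) : ℝ) - Real.log ((∏ i, f i : ℕ) : ℝ)) * t) : ℝ) * Complex.I) := by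
    rw [mul_mul_mul_comm, ← Complex.exp_add, ← Complex.ofReal_mul]
    congr 1
    push_cast
    ring
  rw [this, Complex.re_ofReal_mul, Complex.exp_ofReal_mul_I_re]

lemma int_cos_zero (T : ℝ) : ∫ t in T..(2*T), Real.cos (0 * t) = T := by
  simp
  ring

lemma int_cos_ne {θ : ℝ} (hθ : θ ≠ 0) (T : ℝ) :
    |∫ t in T..(2*T), Real.cos (θ * t)| ≤ 2/|θ| := by
  rw [intervalIntegral.integral_comp_mul_left Real.cos hθ, integral_cos]
  rw [smul_eq_mul, abs_mul, abs_inv]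
  rw [div_eq_mul_one_div 2 |θ|, mul_comm 2 (1/|θ|), one_div]
  apply mul_le_mul_of_nonneg_left _ (by positivity)
  have h1 : |Real.sin (θ*(2*T))| ≤ 1 := abs_le.mpr ⟨Real.neg_one_le_sin _, Real.sin_le_one _⟩
  have h2 : |Real.sin (θ*T)| ≤ 1 := abs_le.mpr ⟨Real.neg_one_le_sin _, Real.sin_le_one _⟩
  calc |Real.sin (θ*(2*T)) - Real.sin (θ*T)| ≤ |Real.sin (θ*(2*T))| + |Real.sin (θ*T)| :=
        abs_sub _ _
    _ ≤ 2 := by linarith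

lemma log_gap {n m : ℕ} (h1 : 1 ≤ n) (hnm : n < m) :
    1/(2*(n:ℝ)) ≤ Real.log m - Real.log n := by
  have hn : (0:ℝ) < n := by exact_mod_cast h1
  have hm : ((n:ℝ)+1) ≤ m := by exact_mod_cast hnm
  have h2 : Real.log ((n:ℝ)+1) ≤ Real.log m := Real.log_le_log (by positivity) hm
  have hy : (0:ℝ) < (n:ℝ)/((n:ℝ)+1) := by positivity
  have h3 := Real.log_le_sub_one_of_pos hy
  rw [Real.log_div (by positivity) (by positivity)] at h3
  have h4 : (n:ℝ)/((n:ℝ)+1) - 1 = -(1/((n:ℝ)+1)) := by field_simp; ring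
  have h5 : 1/(2*(n:ℝ)) ≤ 1/((n:ℝ)+1) := by
    apply one_div_le_one_div_of_le (by positivity)
    have : (1:ℝ) ≤ n := by exact_mod_cast h1
    linarith
  linarith

lemma count_le (k : ℕ) (P : Finset ℕ) (hP : ∀ p ∈ P, p.Prime) (f : Fin k → ℕ)
    (hf : f ∈ Fintype.piFinset (fun _ : Fin k => P)) :
    ((Fintype.piFinset (fun _ : Fin k => P)).filter (fun g => ∏ i, g i = ∏ i, f i)).card ≤ k^k := by
  classical
  have hsub : (Fintype.piFinset (fun _ : Fin k => P)).filter (fun g => ∏ i, g i = ∏ i, f i)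
      ⊆ Fintype.piFinset (fun _ : Fin k => Finset.image f Finset.univ) := by
    intro g hg
    rw [Finset.mem_filter] at hg
    obtain ⟨hgPP, hgN⟩ := hg
    rw [Fintype.mem_piFinset]
    intro i
    have hgi : (g i).Prime := hP _ (Fintype.mem_piFinset.mp hgPP i)
    have hdvd : g i ∣ ∏ j, f j := hgN ▸ Finset.dvd_prod_of_mem g (Finset.mem_univ i)
    obtain ⟨j, _, hj⟩ := hgi.prime.exists_mem_finset_dvd hdvd
    have heq : g i = f j :=
      ((Nat.prime_dvd_prime_iff_eq hgi (hP _ (Fintype.mem_piFinset.mp hf j))).mp hj)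
    exact Finset.mem_image.mpr ⟨j, Finset.mem_univ j, heq.symm⟩
  calc ((Fintype.piFinset (fun _ : Fin k => P)).filter (fun g => ∏ i, g i = ∏ i, f i)).card
      ≤ (Fintype.piFinset (fun _ : Fin k => Finset.image f Finset.univ)).card :=
        Finset.card_le_card hsub
    _ = (Finset.image f Finset.univ).card ^ k := by
        rw [Fintype.card_piFinset, Finset.prod_const, Finset.card_fin]
    _ ≤ k^k := by
        apply Nat.pow_le_pow_left
        calc (Finset.image f Finset.univ).card ≤ (Finset.univ : Finset (Fin k)).card :=
              Finset.card_image_le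
          _ = k := Finset.card_fin k

lemma sum_integral (T : ℝ) {ι : Type*} (s : Finset ι) (c : ι → ι → ℝ) (θ : ι → ι → ℝ) :
    (∫ t in T..(2*T), ∑ f ∈ s, ∑ g ∈ s, c f g * Real.cos (θ f g * t))
    = ∑ f ∈ s, ∑ g ∈ s, c f g * ∫ t in T..(2*T), Real.cos (θ f g * t) := by
  rw [intervalIntegral.integral_finset_sum]
  · refine Finset.sum_congr rfl fun f _ => ?_
    rw [intervalIntegral.integral_finset_sum]
    · exact Finset.sum_congr rfl fun g _ => intervalIntegral.integral_const_mul _ _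
    · exact fun g _ => (Continuous.intervalIntegrable (by fun_prop) _ _)
  · exact fun f _ => (Continuous.intervalIntegrable (by fun_prop) _ _)

lemma sum_pow (k : ℕ) (P : Finset ℕ) (b : ℕ → ℝ) :
    (∑ p ∈ P, b p)^k = ∑ f ∈ Fintype.piFinset (fun _ : Fin k => P), ∏ i, b (f i) := by
  have h : (∑ p ∈ P, b p)^k = ∏ _i : Fin k, ∑ p ∈ P, b p := by
    rw [Finset.prod_const, Finset.card_fin]
  rw [h, Finset.prod_univ_sum]

lemma A_eq (σ : ℝ) {k : ℕ} (f : Fin k → ℕ) (hf : ∀ i, 0 < f i) :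
    ∏ i, ((f i:ℝ)) ^ (-σ) = ((∏ i, f i : ℕ) : ℝ) ^ (-σ) := by
  push_cast
  exact Real.finset_prod_rpow _ _ (fun i _ => by positivity) _

lemma log_gap' {n m : ℕ} {Z : ℝ} (hn : 1 ≤ n) (hm : 1 ≤ m) (hne : m ≠ n)
    (hnZ : (n:ℝ) ≤ Z) (hmZ : (m:ℝ) ≤ Z) :
    1/(2*Z) ≤ |Real.log m - Real.log n| := by
  have hn0 : (1:ℝ) ≤ (n:ℝ) := by exact_mod_cast hn
  have hm0 : (1:ℝ) ≤ (m:ℝ) := by exact_mod_cast hm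
  have hZ : (0:ℝ) < Z := lt_of_lt_of_le (by linarith) hnZ
  have h0 : (0:ℝ) < 1/(2*Z) := by positivity
  rcases lt_or_gt_of_ne hne with h | h
  · -- m < n
    have h1 := log_gap hm h
    have h2 : 1/(2*Z) ≤ 1/(2*(m:ℝ)) :=
      one_div_le_one_div_of_le (by linarith) (by linarith)
    rw [abs_sub_comm, abs_of_nonneg (by linarith [h1, h2])]
    linarith
  · -- n < m
    have h1 := log_gap hn h
    have h2 : 1/(2*Z) ≤ 1/(2*(n:ℝ)) :=
      one_div_le_one_div_of_le (by linarith) (by linarith)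
    rw [abs_of_nonneg (by linarith [h1, h2])]
    linarith

end Stmt10

set_option maxHeartbeats 2000000 in
open Stmt10 in
theorem stmt10 (σ : ℝ) (hσ : 1/2 < σ) (hσ1 : σ < 1) :
    ∃ C > (0:ℝ), ∀ y z T : ℝ, ∀ k : ℕ,
      2 ≤ y → y ≤ z → 2 ≤ T → 1 ≤ k → (k:ℝ) ≤ Real.log T / (3 * Real.log z) →
      (1/T) * (∫ t in T..(2*T),
          (‖(∑ p ∈ Finset.filter Nat.Prime (Finset.Icc ⌈y⌉₊ ⌊z⌋₊),
              (p:ℂ) ^ (-((σ:ℂ) + (t:ℂ) * Complex.I)))‖) ^ (2*k))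
        ≤ C * (((k:ℝ) * ∑ p ∈ Finset.filter Nat.Prime (Finset.Icc ⌈y⌉₊ ⌊z⌋₊),
              (p:ℝ) ^ (-(2*σ))) ^ k + T ^ (-(1/3) : ℝ)) := by
  classical
  refine ⟨5, by norm_num, ?_⟩
  intro y z T k hy hyz hT hk hkT
  set P := Finset.filter Nat.Prime (Finset.Icc ⌈y⌉₊ ⌊z⌋₊) with hPdef
  have hz2 : (2:ℝ) ≤ z := le_trans hy hyz
  have hz1 : (1:ℝ) ≤ z := by linarith
  have hT0 : (0:ℝ) < T := by linarith
  have hlogz : 0 < Real.log z := Real.log_pos (by linarith)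
  have hPp : ∀ p ∈ P, Nat.Prime p := fun p hp => (Finset.mem_filter.mp hp).2
  have hPpos : ∀ p ∈ P, 0 < p := fun p hp => (hPp p hp).pos
  have hPz : ∀ p ∈ P, (p:ℝ) ≤ z := by
    intro p hp
    have h1 := (Finset.mem_Icc.mp (Finset.mem_filter.mp hp).1).2
    calc (p:ℝ) ≤ (⌊z⌋₊:ℝ) := by exact_mod_cast h1
      _ ≤ z := Nat.floor_le (by linarith)
  have hz3k : z ^ (3*k) ≤ T := by
    have h1 : Real.log (z^(3*k)) ≤ Real.log T := by
      rw [Real.log_pow]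
      have h2 : (k:ℝ) * (3 * Real.log z) ≤ Real.log T :=
        (le_div_iff₀ (by positivity)).mp hkT
      push_cast
      linarith
    calc z^(3*k) = Real.exp (Real.log (z^(3*k))) := (Real.exp_log (by positivity)).symm
      _ ≤ Real.exp (Real.log T) := Real.exp_le_exp.mpr h1
      _ = T := Real.exp_log hT0
  have hcard : (P.card : ℝ) ≤ z := by
    have h1 : P.card ≤ ⌊z⌋₊ := by
      have h2 : P.card ≤ (Finset.Icc ⌈y⌉₊ ⌊z⌋₊).card :=
        Finset.card_le_card (Finset.filter_subset _ _)
      rw [Nat.card_Icc] at h2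
      have h3 : 1 ≤ ⌈y⌉₊ := Nat.one_le_ceil_iff.mpr (by linarith)
      omega
    calc (P.card:ℝ) ≤ (⌊z⌋₊:ℝ) := by exact_mod_cast h1
      _ ≤ z := Nat.floor_le (by linarith)
  set PF := Fintype.piFinset (fun _ : Fin k => P) with hPFdef
  set a : ℕ → ℝ := fun p => (p:ℝ) ^ (-σ) with hadef
  set A : (Fin k → ℕ) → ℝ := fun f => ∏ i, a (f i) with hAdef
  set L : (Fin k → ℕ) → ℝ := fun f => Real.log ((∏ i, f i : ℕ) : ℝ) with hLdef
  have ha0 : ∀ p, 0 ≤ a p := fun p => Real.rpow_nonneg (Nat.cast_nonneg p) _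
  have hA0 : ∀ f, 0 ≤ A f := fun f => Finset.prod_nonneg (fun i _ => ha0 _)
  have hPF : ∀ f ∈ PF, ∀ i, f i ∈ P := fun f hf => Fintype.mem_piFinset.mp hf
  have hNpos : ∀ f ∈ PF, 1 ≤ ∏ i, f i := by
    intro f hf
    exact Finset.one_le_prod' (fun i _ => hPpos _ (hPF f hf i))
  have hNle : ∀ f ∈ PF, ((∏ i, f i : ℕ) : ℝ) ≤ z ^ k := by
    intro f hf
    push_cast
    calc ∏ i, ((f i : ℕ):ℝ) ≤ ∏ _i : Fin k, z :=
          Finset.prod_le_prod (fun i _ => Nat.cast_nonneg _) (fun i _ => hPz _ (hPF f hf i))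
      _ = z ^ k := by rw [Finset.prod_const, Finset.card_fin]
  have hexp : ∀ t : ℝ, (‖∑ p ∈ P, (p:ℂ) ^ (-((σ:ℂ) + (t:ℂ) * Complex.I))‖) ^ (2*k)
      = ∑ f ∈ PF, ∑ g ∈ PF, (A f * A g) * Real.cos ((L g - L f) * t) :=
    fun t => expand σ t k P hPpos
  have hint : (∫ t in T..(2*T),
        (‖∑ p ∈ P, (p:ℂ) ^ (-((σ:ℂ) + (t:ℂ) * Complex.I))‖) ^ (2*k))
      = ∑ f ∈ PF, ∑ g ∈ PF, (A f * A g) * ∫ t in T..(2*T), Real.cos ((L g - L f) * t) := by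
    simp only [hexp]
    exact sum_integral T PF (fun f g => A f * A g) (fun f g => L g - L f)
  rw [hint]
  set J : (Fin k → ℕ) → (Fin k → ℕ) → ℝ :=
    fun f g => if (∏ i, g i) = (∏ i, f i) then T else 4 * z ^ k with hJdef
  have hIJ : ∀ f ∈ PF, ∀ g ∈ PF,
      (∫ t in T..(2*T), Real.cos ((L g - L f) * t)) ≤ J f g := by
    intro f hf g hg
    by_cases h : (∏ i, g i) = (∏ i, f i)
    · have hL : L g - L f = 0 := by
        simp only [hLdef]
        rw [h]
        exact sub_self _
      rw [hL]
      simp only [hJdef]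
      rw [if_pos h]
      exact le_of_eq (int_cos_zero T)
    · have hθ : 1/(2*z^k) ≤ |L g - L f| :=
        log_gap' (hNpos f hf) (hNpos g hg) h (hNle f hf) (hNle g hg)
      have hzk : (0:ℝ) < z ^ k := by positivity
      have hθ0 : L g - L f ≠ 0 := by
        intro h0
        rw [h0, abs_zero] at hθ
        have hpos : (0:ℝ) < 1/(2*z^k) := by positivity
        linarith
      calc (∫ t in T..(2*T), Real.cos ((L g - L f) * t))
          ≤ |∫ t in T..(2*T), Real.cos ((L g - L f) * t)| := le_abs_self _
        _ ≤ 2/|L g - L f| := int_cos_ne hθ0 T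
        _ ≤ 4 * z ^ k := by
            have h1 : 1/|L g - L f| ≤ 1/(1/(2*z^k)) :=
              one_div_le_one_div_of_le (by positivity) hθ
            rw [one_div_one_div] at h1
            have h2 : 2/|L g - L f| = 2 * (1/|L g - L f|) := by ring
            rw [h2]
            linarith
        _ ≤ J f g := by
            simp only [hJdef]
            rw [if_neg h]
  have hstep1 : ∑ f ∈ PF, ∑ g ∈ PF, (A f * A g) * (∫ t in T..(2*T), Real.cos ((L g - L f) * t))
      ≤ ∑ f ∈ PF, ∑ g ∈ PF, (A f * A g) * J f g := by
    refine Finset.sum_le_sum fun f hf => Finset.sum_le_sum fun g hg => ?_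
    exact mul_le_mul_of_nonneg_left (hIJ f hf g hg) (mul_nonneg (hA0 f) (hA0 g))
  set Q : ℝ := ∑ p ∈ P, (p:ℝ) ^ (-(2*σ)) with hQdef
  have hQ0 : 0 ≤ Q := by
    rw [hQdef]
    exact Finset.sum_nonneg fun p _ => Real.rpow_nonneg (Nat.cast_nonneg p) _
  have hQsq : ∑ p ∈ P, (a p)^2 = Q := by
    rw [hQdef]
    refine Finset.sum_congr rfl fun p hp => ?_
    have hp0 : (0:ℝ) < (p:ℝ) := by exact_mod_cast hPpos p hp
    simp only [hadef]
    rw [sq, ← Real.rpow_add hp0]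
    congr 1
    ring
  have hAgf : ∀ f ∈ PF, ∀ g ∈ PF, (∏ i, g i) = (∏ i, f i) → A g = A f := by
    intro f hf g hg h
    simp only [hAdef, hadef]
    rw [A_eq σ g (fun i => hPpos _ (hPF g hg i)), A_eq σ f (fun i => hPpos _ (hPF f hf i)), h]
  have hstep2 : ∑ f ∈ PF, ∑ g ∈ PF, (A f * A g) * J f g
      ≤ T * ((k:ℝ)^k * ∑ f ∈ PF, (A f)^2)
        + (4 * z^k) * ((∑ f ∈ PF, A f) * (∑ g ∈ PF, A g)) := by
    have hinner : ∀ f ∈ PF, ∑ g ∈ PF, (A f * A g) * J f g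
        ≤ T * ((k:ℝ)^k * (A f)^2) + (4 * z^k) * (A f * ∑ g ∈ PF, A g) := by
      intro f hf
      rw [← Finset.sum_filter_add_sum_filter_not PF (fun g => (∏ i, g i) = (∏ i, f i))]
      have hd : ∑ g ∈ PF.filter (fun g => (∏ i, g i) = (∏ i, f i)), (A f * A g) * J f g
          ≤ T * ((k:ℝ)^k * (A f)^2) := by
        have he : ∀ g ∈ PF.filter (fun g => (∏ i, g i) = (∏ i, f i)),
            (A f * A g) * J f g = (A f)^2 * T := by
          intro g hg
          obtain ⟨hg1, hg2⟩ := Finset.mem_filter.mp hg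
          rw [hAgf f hf g hg1 hg2]
          simp only [hJdef]
          rw [if_pos hg2]
          ring
        rw [Finset.sum_congr rfl he, Finset.sum_const, nsmul_eq_mul]
        have hcount : ((PF.filter (fun g => (∏ i, g i) = (∏ i, f i))).card : ℝ) ≤ (k:ℝ)^k := by
          have hc := count_le k P hPp f hf
          calc ((PF.filter (fun g => (∏ i, g i) = (∏ i, f i))).card : ℝ)
              ≤ ((k^k : ℕ) : ℝ) := by exact_mod_cast hc
            _ = (k:ℝ)^k := by push_cast; ring
        calc ((PF.filter (fun g => (∏ i, g i) = (∏ i, f i))).card : ℝ) * ((A f)^2 * T)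
            ≤ (k:ℝ)^k * ((A f)^2 * T) := by
              apply mul_le_mul_of_nonneg_right hcount
              have := hA0 f
              positivity
          _ = T * ((k:ℝ)^k * (A f)^2) := by ring
      have ho : ∑ g ∈ PF.filter (fun g => ¬((∏ i, g i) = (∏ i, f i))), (A f * A g) * J f g
          ≤ (4 * z^k) * (A f * ∑ g ∈ PF, A g) := by
        have he : ∀ g ∈ PF.filter (fun g => ¬((∏ i, g i) = (∏ i, f i))),
            (A f * A g) * J f g = (A f * A g) * (4 * z^k) := by
          intro g hg
          obtain ⟨hg1, hg2⟩ := Finset.mem_filter.mp hg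
          simp only [hJdef]
          rw [if_neg hg2]
        rw [Finset.sum_congr rfl he]
        calc ∑ g ∈ PF.filter (fun g => ¬((∏ i, g i) = (∏ i, f i))), (A f * A g) * (4 * z^k)
            ≤ ∑ g ∈ PF, (A f * A g) * (4 * z^k) := by
              apply Finset.sum_le_sum_of_subset_of_nonneg (Finset.filter_subset _ _)
              intro g hg _
              have h1 := hA0 f
              have h2 := hA0 g
              positivity
          _ = (4 * z^k) * (A f * ∑ g ∈ PF, A g) := by
              rw [Finset.mul_sum, Finset.mul_sum]
              exact Finset.sum_congr rfl fun g _ => by ring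
      exact add_le_add hd ho
    calc ∑ f ∈ PF, ∑ g ∈ PF, (A f * A g) * J f g
        ≤ ∑ f ∈ PF, (T * ((k:ℝ)^k * (A f)^2) + (4 * z^k) * (A f * ∑ g ∈ PF, A g)) :=
          Finset.sum_le_sum hinner
      _ = T * ((k:ℝ)^k * ∑ f ∈ PF, (A f)^2)
          + (4 * z^k) * ((∑ f ∈ PF, A f) * (∑ g ∈ PF, A g)) := by
          rw [Finset.sum_add_distrib]
          congr 1
          · rw [← Finset.mul_sum, ← Finset.mul_sum]
          · rw [← Finset.mul_sum, ← Finset.sum_mul]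
  have hsum2 : ∑ f ∈ PF, (A f)^2 = Q^k := by
    rw [← hQsq, sum_pow k P (fun p => (a p)^2)]
    refine Finset.sum_congr rfl fun f _ => ?_
    simp only [hAdef]
    exact (Finset.prod_pow _ _ _).symm
  have hsum1 : ∑ f ∈ PF, A f = (∑ p ∈ P, a p)^k := (sum_pow k P a).symm
  have hCS : (∑ p ∈ P, a p)^2 ≤ (P.card : ℝ) * Q := by
    have h := Finset.sum_mul_sq_le_sq_mul_sq P (fun _ => (1:ℝ)) a
    simp only [one_mul, one_pow] at h
    rw [Finset.sum_const, nsmul_eq_mul, mul_one] at h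
    rw [hQsq] at h
    exact h
  have hSA2 : (∑ f ∈ PF, A f) * (∑ g ∈ PF, A g) ≤ z^k * Q^k := by
    rw [hsum1]
    have h1 : (∑ p ∈ P, a p)^k * (∑ p ∈ P, a p)^k = ((∑ p ∈ P, a p)^2)^k := by
      rw [← pow_add, ← pow_mul]
      congr 1
      omega
    rw [h1]
    calc ((∑ p ∈ P, a p)^2)^k ≤ ((P.card : ℝ) * Q)^k :=
          pow_le_pow_left₀ (sq_nonneg _) hCS k
      _ ≤ (z * Q)^k := by
          apply pow_le_pow_left₀ (by positivity)
          exact mul_le_mul_of_nonneg_right hcard hQ0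
      _ = z^k * Q^k := mul_pow z Q k
  have hz2k : z^k * z^k ≤ T := by
    calc z^k * z^k = z^(2*k) := by rw [← pow_add]; congr 1; omega
      _ ≤ z^(3*k) := pow_le_pow_right₀ hz1 (by omega)
      _ ≤ T := hz3k
  have hk1 : (1:ℝ) ≤ (k:ℝ) := by exact_mod_cast hk
  have hkk1 : (1:ℝ) ≤ (k:ℝ)^k := by
    calc (1:ℝ) = 1^k := (one_pow k).symm
      _ ≤ (k:ℝ)^k := pow_le_pow_left₀ zero_le_one hk1 k
  have hrpow0 : 0 ≤ T ^ (-(1/3) : ℝ) := Real.rpow_nonneg hT0.le _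
  have hQk0 : 0 ≤ Q^k := pow_nonneg hQ0 k
  have hfinal : ∑ f ∈ PF, ∑ g ∈ PF, (A f * A g) * (∫ t in T..(2*T), Real.cos ((L g - L f) * t))
      ≤ T * ((k:ℝ)^k * Q^k) + (4 * z^k) * (z^k * Q^k) := by
    calc ∑ f ∈ PF, ∑ g ∈ PF, (A f * A g) * (∫ t in T..(2*T), Real.cos ((L g - L f) * t))
        ≤ ∑ f ∈ PF, ∑ g ∈ PF, (A f * A g) * J f g := hstep1
      _ ≤ T * ((k:ℝ)^k * ∑ f ∈ PF, (A f)^2)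
          + (4 * z^k) * ((∑ f ∈ PF, A f) * (∑ g ∈ PF, A g)) := hstep2
      _ ≤ T * ((k:ℝ)^k * Q^k) + (4 * z^k) * (z^k * Q^k) := by
          rw [hsum2]
          have h4 : (0:ℝ) ≤ 4 * z^k := by positivity
          exact add_le_add (le_refl _) (mul_le_mul_of_nonneg_left hSA2 h4)
  calc (1/T) * (∑ f ∈ PF, ∑ g ∈ PF, (A f * A g) * (∫ t in T..(2*T), Real.cos ((L g - L f) * t)))
      ≤ (1/T) * (T * ((k:ℝ)^k * Q^k) + (4 * z^k) * (z^k * Q^k)) :=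
        mul_le_mul_of_nonneg_left hfinal (by positivity)
    _ = (k:ℝ)^k * Q^k + 4 * ((z^k * z^k)/T) * Q^k := by
        field_simp
    _ ≤ (k:ℝ)^k * Q^k + 4 * 1 * Q^k := by
        have h1 : (z^k * z^k)/T ≤ 1 := (div_le_one hT0).mpr hz2k
        have h2 := mul_le_mul_of_nonneg_right
          (mul_le_mul_of_nonneg_left h1 (by norm_num : (0:ℝ) ≤ 4)) hQk0
        linarith
    _ ≤ 5 * ((k:ℝ)^k * Q^k) := by nlinarith [hkk1, hQk0]
    _ = 5 * (((k:ℝ) * Q)^k) := by rw [mul_pow]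
    _ ≤ 5 * (((k:ℝ) * Q)^k + T ^ (-(1/3) : ℝ)) := by linarith
end

section
/- For every real σ with 1/2 < σ < 1 and every real z ≥ 3, one has Σ 1/(ν·p^{νσ}) ≪ (log log z)/z^{σ−1/2}, where the sum is over all pairs (p, ν) with p prime, ν ≥ 1 an integer, p ≤ z and p^{ν} > z, and the implied constant is absolute. -/
open Real

/-- The completely multiplicative function `n ↦ n^{-s}`. -/
noncomputable def zfun (s : ℝ) : ℕ →* ℝ where
  toFun n := (n : ℝ) ^ (-s)
  map_one' := by simp
  map_mul' m n := by
    push_cast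
    exact Real.mul_rpow (Nat.cast_nonneg m) (Nat.cast_nonneg n)

lemma zfun_summable {s : ℝ} (hs : 1 < s) : Summable (zfun s) := by
  have : Summable fun n : ℕ => (n : ℝ) ^ (-s) :=
    Real.summable_nat_rpow.mpr (by linarith)
  exact this

lemma zetaBound {s : ℝ} (hs : 1 < s) :
    (∑' n : ℕ, 1 / ((n : ℝ) + 1) ^ s) ≤ 1 + 1 / (s - 1) := by
  have h := ZetaAsymptotics.zeta_limit_aux1 hs
  have hterm : 0 ≤ ZetaAsymptotics.termTSum s :=
    tsum_nonneg fun n => ZetaAsymptotics.term_nonneg _ _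
  nlinarith [h]

lemma primeSumBound {s : ℝ} (hs : 1 < s) (N : ℕ) :
    ∑ p ∈ N.primesBelow, (p : ℝ) ^ (-s) ≤ Real.log (1 + 1 / (s - 1)) := by
  have hsum := zfun_summable hs
  have hlt : ∀ {p : ℕ}, p.Prime → (zfun s) p < 1 := by
    intro p hp
    have h1 : (1:ℝ) < (p:ℝ) := by exact_mod_cast hp.one_lt
    exact Real.rpow_lt_one_of_one_lt_of_neg h1 (by linarith)
  have hpos : ∀ {p : ℕ}, p.Prime → (0:ℝ) < 1 - zfun s p := by
    intro p hp; linarith [hlt hp]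
  have hnn : ∀ {p : ℕ}, p.Prime → (0:ℝ) ≤ zfun s p := by
    intro p hp
    exact Real.rpow_nonneg (Nat.cast_nonneg p) _
  -- termwise: p^{-s} ≤ log (1 - p^{-s})⁻¹
  have hterm : ∀ p ∈ N.primesBelow, (p : ℝ) ^ (-s) ≤ Real.log (1 - zfun s p)⁻¹ := by
    intro p hp
    have hp' : p.Prime := (Nat.mem_primesBelow.mp hp).2
    have hx := hlt hp'
    have hx0 := hnn hp'
    have h1 : (1:ℝ) - zfun s p ≤ Real.exp (-(zfun s p)) := by
      have := Real.add_one_le_exp (-(zfun s p)); linarith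
    have h2 : Real.log (1 - zfun s p) ≤ -(zfun s p) := by
      calc Real.log (1 - zfun s p) ≤ Real.log (Real.exp (-(zfun s p))) :=
            Real.log_le_log (hpos hp') h1
        _ = -(zfun s p) := Real.log_exp _
    rw [Real.log_inv]
    show (zfun s p) ≤ -Real.log (1 - zfun s p)
    linarith
  calc ∑ p ∈ N.primesBelow, (p : ℝ) ^ (-s)
      ≤ ∑ p ∈ N.primesBelow, Real.log (1 - zfun s p)⁻¹ := Finset.sum_le_sum hterm
    _ = Real.log (∏ p ∈ N.primesBelow, (1 - zfun s p)⁻¹) := by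
        rw [Real.log_prod]
        intro p hp
        exact inv_ne_zero (hpos (Nat.mem_primesBelow.mp hp).2).ne'
    _ ≤ Real.log (1 + 1 / (s - 1)) := by
        apply Real.log_le_log
        · exact Finset.prod_pos fun p hp => inv_pos.mpr (hpos (Nat.mem_primesBelow.mp hp).2)
        rw [EulerProduct.prod_primesBelow_geometric_eq_tsum_smoothNumbers hsum N]
        -- tsum over smooth numbers ≤ tsum over ℕ ≤ 1 + 1/(s-1)
        have hle1 : (∑' m : N.smoothNumbers, zfun s m) ≤ ∑' n : ℕ, zfun s n := by
          apply Summable.tsum_le_tsum_of_inj Subtype.val Subtype.val_injective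
          · intro n _; exact Real.rpow_nonneg (Nat.cast_nonneg n) _
          · intro b; exact le_rfl
          · exact hsum.subtype _
          · exact hsum
        refine hle1.trans ?_
        have h0 : (∑' n : ℕ, zfun s n) = ∑' n : ℕ, zfun s (n + 1) := by
          rw [Summable.tsum_eq_zero_add hsum]
          have : zfun s 0 = 0 := by
            show ((0:ℕ):ℝ) ^ (-s) = 0
            rw [Nat.cast_zero, Real.zero_rpow (by linarith)]
          rw [this, zero_add]
        rw [h0]
        have heq : ∀ n : ℕ, zfun s (n + 1) = 1 / ((n : ℝ) + 1) ^ s := by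
          intro n
          show ((n + 1 : ℕ) : ℝ) ^ (-s) = _
          rw [Real.rpow_neg (Nat.cast_nonneg _), one_div]
          push_cast
          rfl
        simp_rw [heq]
        exact zetaBound hs

lemma logBasic {t : ℝ} (ht : 0 < t) : 1 - 1/t ≤ Real.log t := by
  have h := Real.log_le_sub_one_of_pos (inv_pos.mpr ht)
  rw [Real.log_inv] at h
  rw [one_div]
  linarith

lemma log3_lb : (1.0939 : ℝ) ≤ Real.log 3 := by
  have he : Real.exp 1 < 2.7182818286 := Real.exp_one_lt_d9
  have he0 : (0:ℝ) < Real.exp 1 := Real.exp_pos 1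
  have h1 : (0:ℝ) < 3 / Real.exp 1 := by positivity
  have h2 := logBasic h1
  have h3 : Real.log (3 / Real.exp 1) = Real.log 3 - 1 := by
    rw [Real.log_div (by norm_num) (Real.exp_ne_zero 1), Real.log_exp]
  rw [h3] at h2
  have h4 : 1 / (3 / Real.exp 1) = Real.exp 1 / 3 := by
    field_simp
  rw [h4] at h2
  nlinarith

lemma loglog_lb {z : ℝ} (hz : 3 ≤ z) : (0.08 : ℝ) ≤ Real.log (Real.log z) := by
  have h3 : (1.0939 : ℝ) ≤ Real.log 3 := log3_lb
  have hlz : (1.0939 : ℝ) ≤ Real.log z := h3.trans (Real.log_le_log (by norm_num) hz)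
  have h := logBasic (lt_of_lt_of_le (by norm_num) hlz)
  have : 1/Real.log z ≤ 1/1.0939 := by
    apply one_div_le_one_div_of_le (by norm_num) hlz
  nlinarith

lemma mertens {z : ℝ} (hz : 3 ≤ z) :
    ∑ p ∈ Finset.filter Nat.Prime (Finset.Iic ⌊z⌋₊), (1 : ℝ) / p
      ≤ 30 * Real.log (Real.log z) := by
  have hz0 : (0:ℝ) < z := by linarith
  have hlz : (1.0939:ℝ) ≤ Real.log z := log3_lb.trans (Real.log_le_log (by norm_num) hz)
  have hlz0 : (0:ℝ) < Real.log z := by linarith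
  set s : ℝ := 1 + 1 / Real.log z with hs_def
  have hs : 1 < s := by
    rw [hs_def]
    have : (0:ℝ) < 1 / Real.log z := by positivity
    linarith
  have he3 : Real.exp 1 ≤ 3 := by
    have := Real.exp_one_lt_d9; linarith
  -- the finset equals primesBelow (⌊z⌋₊ + 1)
  have hfs : Finset.filter Nat.Prime (Finset.Iic ⌊z⌋₊) = (⌊z⌋₊ + 1).primesBelow := by
    ext x
    simp [Nat.mem_primesBelow, Nat.lt_succ_iff, and_comm]
  -- termwise comparison
  have hterm : ∀ p ∈ Finset.filter Nat.Prime (Finset.Iic ⌊z⌋₊),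
      (1 : ℝ) / p ≤ 3 * (p:ℝ) ^ (-s) := by
    intro p hp
    rw [Finset.mem_filter] at hp
    obtain ⟨hmem, hprime⟩ := hp
    have hp2 : (2:ℝ) ≤ p := by exact_mod_cast hprime.two_le
    have hp0 : (0:ℝ) < p := by linarith
    have hpz : (p:ℝ) ≤ z := by
      rw [Finset.mem_Iic] at hmem
      calc (p:ℝ) ≤ (⌊z⌋₊ : ℝ) := by exact_mod_cast hmem
        _ ≤ z := Nat.floor_le hz0.le
    have hkey : (p:ℝ) ^ (1 / Real.log z) ≤ 3 := by
      calc (p:ℝ) ^ (1 / Real.log z) ≤ z ^ (1 / Real.log z) :=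
            Real.rpow_le_rpow hp0.le hpz (by positivity)
        _ = Real.exp 1 := by
            rw [Real.rpow_def_of_pos hz0]
            congr 1
            field_simp
        _ ≤ 3 := he3
    have hsplit : (p:ℝ) ^ (-s) = (p:ℝ)⁻¹ * ((p:ℝ) ^ (1 / Real.log z))⁻¹ := by
      rw [← Real.rpow_neg_one (p:ℝ), ← Real.rpow_neg hp0.le, ← Real.rpow_add hp0]
      congr 1
      rw [hs_def]; ring
    rw [hsplit]
    rw [one_div]
    have hppos : (0:ℝ) < (p:ℝ) ^ (1 / Real.log z) := Real.rpow_pos_of_pos hp0 _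
    calc (p:ℝ)⁻¹ = (p:ℝ)⁻¹ * (((p:ℝ) ^ (1 / Real.log z)) * ((p:ℝ) ^ (1 / Real.log z))⁻¹) := by
          rw [mul_inv_cancel₀ hppos.ne', mul_one]
      _ ≤ (p:ℝ)⁻¹ * (3 * ((p:ℝ) ^ (1 / Real.log z))⁻¹) := by
          apply mul_le_mul_of_nonneg_left _ (by positivity)
          apply mul_le_mul_of_nonneg_right hkey (by positivity)
      _ = 3 * ((p:ℝ)⁻¹ * ((p:ℝ) ^ (1 / Real.log z))⁻¹) := by ring
  calc ∑ p ∈ Finset.filter Nat.Prime (Finset.Iic ⌊z⌋₊), (1 : ℝ) / p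
      ≤ ∑ p ∈ Finset.filter Nat.Prime (Finset.Iic ⌊z⌋₊), 3 * (p:ℝ) ^ (-s) :=
        Finset.sum_le_sum hterm
    _ = 3 * ∑ p ∈ (⌊z⌋₊ + 1).primesBelow, (p:ℝ) ^ (-s) := by
        rw [hfs, Finset.mul_sum]
    _ ≤ 3 * Real.log (1 + 1 / (s - 1)) := by
        have := primeSumBound hs (⌊z⌋₊ + 1)
        linarith
    _ ≤ 30 * Real.log (Real.log z) := by
        have h1 : 1 / (s - 1) = Real.log z := by
          rw [hs_def]; simp
        rw [h1]
        have h2 : Real.log (1 + Real.log z) ≤ Real.log (2 * Real.log z) := by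
          apply Real.log_le_log (by linarith)
          linarith
        have h3 : Real.log (2 * Real.log z) = Real.log 2 + Real.log (Real.log z) := by
          rw [Real.log_mul (by norm_num) hlz0.ne']
        have h4 : Real.log 2 < 0.6931471808 := Real.log_two_lt_d9
        have h5 := loglog_lb hz
        nlinarith
lemma tailBound {σ z : ℝ} (hσ : 1/2 < σ) (hz : 3 ≤ z) {p : ℕ} (hp : p.Prime)
    (hpz : (p:ℝ) ≤ z) :
    (∑' ν : {ν : ℕ // 1 ≤ ν ∧ z < (p:ℝ) ^ (ν:ℕ)},
        1 / (((ν:ℕ):ℝ) * (p:ℝ) ^ (((ν:ℕ):ℝ) * σ)))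
      ≤ z ^ ((1:ℝ)/2 - σ) * (4 / p) := by
  have hz0 : (0:ℝ) < z := by linarith
  have hp2 : (2:ℝ) ≤ p := by exact_mod_cast hp.two_le
  have hp0 : (0:ℝ) < p := by linarith
  have hp1 : (1:ℝ) < p := by linarith
  set r : ℝ := (p:ℝ) ^ (-(1/2) : ℝ) with hr_def
  have hr0 : 0 ≤ r := Real.rpow_nonneg hp0.le _
  have hr1 : r < 1 := Real.rpow_lt_one_of_one_lt_of_neg hp1 (by norm_num)
  set c : ℝ := z ^ ((1:ℝ)/2 - σ) with hc_def
  have hc0 : 0 ≤ c := Real.rpow_nonneg hz0.le _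
  set g : ℕ → ℝ := fun ν => if 2 ≤ ν then c * r ^ ν else 0 with hg_def
  have hg_nonneg : ∀ ν, 0 ≤ g ν := by
    intro ν
    simp only [hg_def]
    split
    · positivity
    · exact le_rfl
  have hg_sum : Summable g := by
    apply Summable.of_nonneg_of_le hg_nonneg (f := fun ν => c * r ^ ν)
    · intro ν
      simp only [hg_def]
      split
      · exact le_rfl
      · positivity
    · exact (summable_geometric_of_lt_one hr0 hr1).mul_left c
  have hrpow : ∀ ν : ℕ, r ^ ν = (p:ℝ) ^ (-((ν:ℝ)/2)) := by
    intro ν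
    rw [hr_def, ← Real.rpow_natCast ((p:ℝ) ^ (-(1/2):ℝ)) ν, ← Real.rpow_mul hp0.le]
    congr 1
    ring
  have key : ∀ b : {ν : ℕ // 1 ≤ ν ∧ z < (p:ℝ) ^ (ν:ℕ)},
      1 / (((b:ℕ):ℝ) * (p:ℝ) ^ (((b:ℕ):ℝ) * σ)) ≤ g (b:ℕ) := by
    rintro ⟨ν, hν1, hνz⟩
    have hν2 : 2 ≤ ν := by
      by_contra h
      have hν : ν = 1 := by omega
      rw [hν] at hνz
      simp at hνz
      linarith
    have hν0 : (1:ℝ) ≤ (ν:ℝ) := by exact_mod_cast hν1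
    -- key inequality: z^(σ-1/2) * p^(ν/2) ≤ p^(ν σ)
    have hsplit : (p:ℝ) ^ ((ν:ℝ) * σ)
        = (p:ℝ) ^ ((ν:ℝ) * (σ - 1/2)) * (p:ℝ) ^ ((ν:ℝ)/2) := by
      rw [← Real.rpow_add hp0]
      congr 1
      ring
    have hz_le : z ^ (σ - 1/2) ≤ (p:ℝ) ^ ((ν:ℝ) * (σ - 1/2)) := by
      rw [Real.rpow_mul hp0.le, Real.rpow_natCast]
      exact Real.rpow_le_rpow hz0.le hνz.le (by linarith)
    have hA : z ^ (σ - 1/2) * (p:ℝ) ^ ((ν:ℝ)/2) ≤ ((ν:ℝ)) * (p:ℝ) ^ ((ν:ℝ) * σ) := by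
      calc z ^ (σ - 1/2) * (p:ℝ) ^ ((ν:ℝ)/2)
          ≤ (p:ℝ) ^ ((ν:ℝ) * (σ - 1/2)) * (p:ℝ) ^ ((ν:ℝ)/2) := by
            apply mul_le_mul_of_nonneg_right hz_le (Real.rpow_nonneg hp0.le _)
        _ = (p:ℝ) ^ ((ν:ℝ) * σ) := hsplit.symm
        _ = 1 * (p:ℝ) ^ ((ν:ℝ) * σ) := (one_mul _).symm
        _ ≤ ((ν:ℝ)) * (p:ℝ) ^ ((ν:ℝ) * σ) := by
            apply mul_le_mul_of_nonneg_right hν0 (Real.rpow_nonneg hp0.le _)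
    have hposA : 0 < z ^ (σ - 1/2) * (p:ℝ) ^ ((ν:ℝ)/2) := by
      apply mul_pos (Real.rpow_pos_of_pos hz0 _) (Real.rpow_pos_of_pos hp0 _)
    have h1 : 1 / (((ν:ℕ):ℝ) * (p:ℝ) ^ (((ν:ℕ):ℝ) * σ))
        ≤ 1 / (z ^ (σ - 1/2) * (p:ℝ) ^ ((ν:ℝ)/2)) :=
      one_div_le_one_div_of_le hposA hA
    have h2 : 1 / (z ^ (σ - 1/2) * (p:ℝ) ^ ((ν:ℝ)/2)) = c * r ^ ν := by
      rw [one_div, mul_inv, hrpow ν, hc_def]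
      congr 1
      · rw [← Real.rpow_neg hz0.le]
        congr 1
        ring
      · rw [Real.rpow_neg hp0.le]
    have h3 : g ν = c * r ^ ν := by
      simp only [hg_def]
      rw [if_pos hν2]
    rw [h3]
    exact h1.trans (le_of_eq h2)
  have hf_sum : Summable (fun b : {ν : ℕ // 1 ≤ ν ∧ z < (p:ℝ) ^ (ν:ℕ)} =>
      1 / (((b:ℕ):ℝ) * (p:ℝ) ^ (((b:ℕ):ℝ) * σ))) := by
    apply Summable.of_nonneg_of_le _ key
    · exact hg_sum.comp_injective Subtype.val_injective
    · intro b
      positivity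
  have hle : (∑' ν : {ν : ℕ // 1 ≤ ν ∧ z < (p:ℝ) ^ (ν:ℕ)},
        1 / (((ν:ℕ):ℝ) * (p:ℝ) ^ (((ν:ℕ):ℝ) * σ))) ≤ ∑' ν : ℕ, g ν :=
    Summable.tsum_le_tsum_of_inj Subtype.val Subtype.val_injective
      (fun a _ => hg_nonneg a) key hf_sum hg_sum
  refine hle.trans ?_
  -- compute tsum g
  have htsum : (∑' ν : ℕ, g ν) = c * r ^ 2 * (1 - r)⁻¹ := by
    rw [← Summable.sum_add_tsum_nat_add 2 hg_sum]
    have h0 : ∑ i ∈ Finset.range 2, g i = 0 := by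
      simp only [hg_def]
      rw [Finset.sum_range_succ, Finset.sum_range_one]
      norm_num
    rw [h0, zero_add]
    have h1 : ∀ i : ℕ, g (i + 2) = c * r ^ 2 * r ^ i := by
      intro i
      simp only [hg_def]
      rw [if_pos (by omega)]
      ring
    simp_rw [h1]
    rw [tsum_mul_left, tsum_geometric_of_lt_one hr0 hr1]
  rw [htsum]
  -- r^2 = 1/p and (1-r)⁻¹ ≤ 4
  have hr2 : r ^ 2 = (p:ℝ)⁻¹ := by
    rw [hrpow 2]
    push_cast
    rw [show -((2:ℝ)/2) = -1 by norm_num, Real.rpow_neg_one]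
  have hrA : r ≤ 3/4 := by
    have hA2 : ((2:ℝ) ^ ((1/2):ℝ)) ^ 2 = 2 := by
      rw [← Real.rpow_natCast ((2:ℝ) ^ ((1/2):ℝ)) 2, ← Real.rpow_mul (by norm_num)]
      norm_num
    have hA0 : (0:ℝ) ≤ (2:ℝ) ^ ((1/2):ℝ) := Real.rpow_nonneg (by norm_num) _
    have hA43 : (4:ℝ)/3 ≤ (2:ℝ) ^ ((1/2):ℝ) := by nlinarith
    have hrr : r ≤ (2:ℝ) ^ (-(1/2):ℝ) := by
      rw [hr_def, Real.rpow_neg hp0.le, Real.rpow_neg (by norm_num : (0:ℝ) ≤ 2)]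
      apply inv_anti₀ (Real.rpow_pos_of_pos (by norm_num) _)
      exact Real.rpow_le_rpow (by norm_num) hp2 (by norm_num)
    have h24 : (2:ℝ) ^ (-(1/2):ℝ) ≤ 3/4 := by
      have : (2:ℝ) ^ (-(1/2):ℝ) = ((2:ℝ) ^ ((1/2):ℝ))⁻¹ := by
        rw [← Real.rpow_neg (by norm_num)]
      rw [this]
      rw [inv_le_comm₀ (by nlinarith) (by norm_num)]
      linarith
    linarith
  have hfin : c * r ^ 2 * (1 - r)⁻¹ ≤ c * (4 / p) := by
    rw [hr2]
    have h14 : (1 - r)⁻¹ ≤ 4 := by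
      rw [inv_le_comm₀ (by linarith) (by norm_num)]
      linarith
    calc c * (p:ℝ)⁻¹ * (1 - r)⁻¹ ≤ c * (p:ℝ)⁻¹ * 4 := by
          apply mul_le_mul_of_nonneg_left h14 (by positivity)
      _ = c * (4 / p) := by ring
  exact hfin

theorem stmt12 :
    ∃ C > (0:ℝ), ∀ σ z : ℝ, 1/2 < σ → σ < 1 → 3 ≤ z →
      (∑ p ∈ Finset.filter Nat.Prime (Finset.Iic ⌊z⌋₊),
          ∑' ν : {ν : ℕ // 1 ≤ ν ∧ z < (p:ℝ) ^ (ν:ℕ)},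
            1 / (((ν:ℕ):ℝ) * (p:ℝ) ^ (((ν:ℕ):ℝ) * σ)))
        ≤ C * Real.log (Real.log z) / z ^ (σ - 1/2) := by
  refine ⟨120, by norm_num, ?_⟩
  intro σ z hσ1 hσ2 hz
  have hz0 : (0:ℝ) < z := by linarith
  have hstep : ∀ p ∈ Finset.filter Nat.Prime (Finset.Iic ⌊z⌋₊),
      (∑' ν : {ν : ℕ // 1 ≤ ν ∧ z < (p:ℝ) ^ (ν:ℕ)},
          1 / (((ν:ℕ):ℝ) * (p:ℝ) ^ (((ν:ℕ):ℝ) * σ)))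
        ≤ z ^ ((1:ℝ)/2 - σ) * (4 / p) := by
    intro p hp
    rw [Finset.mem_filter, Finset.mem_Iic] at hp
    refine tailBound hσ1 hz hp.2 ?_
    calc (p:ℝ) ≤ (⌊z⌋₊ : ℝ) := by exact_mod_cast hp.1
      _ ≤ z := Nat.floor_le hz0.le
  calc (∑ p ∈ Finset.filter Nat.Prime (Finset.Iic ⌊z⌋₊),
          ∑' ν : {ν : ℕ // 1 ≤ ν ∧ z < (p:ℝ) ^ (ν:ℕ)},
            1 / (((ν:ℕ):ℝ) * (p:ℝ) ^ (((ν:ℕ):ℝ) * σ)))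
      ≤ ∑ p ∈ Finset.filter Nat.Prime (Finset.Iic ⌊z⌋₊), z ^ ((1:ℝ)/2 - σ) * (4 / p) :=
        Finset.sum_le_sum hstep
    _ = (4 * z ^ ((1:ℝ)/2 - σ)) * ∑ p ∈ Finset.filter Nat.Prime (Finset.Iic ⌊z⌋₊), (1:ℝ)/p := by
        rw [Finset.mul_sum]
        apply Finset.sum_congr rfl
        intro p _
        ring
    _ ≤ (4 * z ^ ((1:ℝ)/2 - σ)) * (30 * Real.log (Real.log z)) := by
        apply mul_le_mul_of_nonneg_left (mertens hz)
        positivity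
    _ = 120 * Real.log (Real.log z) / z ^ (σ - 1/2) := by
        rw [show (1:ℝ)/2 - σ = -(σ - 1/2) by ring, Real.rpow_neg hz0.le, div_eq_mul_inv]
        ring
end

section
/- Let σ ∈ (1/2, 1) be fixed, let N ≥ 0 be an integer, and let a_0 > 0, a_1, …, a_{N+1} be real numbers. Suppose the positive reals τ = τ(k) and k are related by τ = (k^{1/σ−1}/(σ log k))·Σ_{n=0}^{N+1} a_n/(log k)^n as k → ∞. Then there exists a sequence of polynomials b_0, b_1, …, b_N with real coefficients, deg(b_n) ≤ n and b_0 the constant σ/(1−σ), such that log k = (log τ)·{ Σ_{n=0}^{N} b_n(log_2 τ)/(log τ)^n + O( (log_2 τ/log τ)^{N+1} ) }, where the implied constant depends only on σ, N and the a_n. -/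
open Real

open Real Filter Polynomial Topology

namespace Stmt17

noncomputable def PE (m t : ℝ) : Polynomial (Polynomial ℝ) →+* ℝ :=
  eval₂RingHom (evalRingHom m) t⁻¹

lemma PE_C (m t : ℝ) (p : Polynomial ℝ) : PE m t (C p) = p.eval m := by
  simp [PE]

lemma PE_CC (m t c : ℝ) : PE m t (C (C c)) = c := by simp [PE]

lemma PE_X (m t : ℝ) : PE m t X = t⁻¹ := by simp [PE]

def Good (V : Polynomial (Polynomial ℝ)) : Prop := ∀ n, (V.coeff n).natDegree ≤ n

lemma good_add {V W} (hV : Good V) (hW : Good W) : Good (V + W) := fun n => by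
  rw [coeff_add]
  exact (natDegree_add_le _ _).trans (max_le (hV n) (hW n))

lemma good_mul {V W} (hV : Good V) (hW : Good W) : Good (V * W) := fun n => by
  rw [coeff_mul]
  apply natDegree_sum_le_of_forall_le
  rintro ⟨i, j⟩ hij
  rw [Finset.HasAntidiagonal.mem_antidiagonal] at hij
  exact natDegree_mul_le.trans (by rw [← hij]; exact add_le_add (hV i) (hW j))

lemma good_CC (c : ℝ) : Good (C (C c)) := fun n => by
  rw [coeff_C]
  split <;> simp

lemma good_zero : Good 0 := fun n => by simp

lemma good_one : Good 1 := by simpa using good_CC 1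

lemma good_neg {V} (hV : Good V) : Good (-V) := fun n => by
  rw [coeff_neg, natDegree_neg]; exact hV n

lemma good_sub {V W} (hV : Good V) (hW : Good W) : Good (V - W) := by
  rw [sub_eq_add_neg]; exact good_add hV (good_neg hW)

lemma good_X : Good (X : Polynomial (Polynomial ℝ)) := fun n => by
  rw [coeff_X]
  split <;> simp

lemma good_pow {V} (hV : Good V) (m : ℕ) : Good (V ^ m) := by
  induction m with
  | zero => simpa using good_one
  | succ m ih => rw [pow_succ]; exact good_mul ih hV

lemma good_sum {ι : Type*} (s : Finset ι) (f : ι → Polynomial (Polynomial ℝ))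
    (h : ∀ i ∈ s, Good (f i)) : Good (∑ i ∈ s, f i) := by
  classical
  induction s using Finset.induction_on with
  | empty => simpa using good_zero
  | insert _ _ hx ih =>
    rw [Finset.sum_insert hx]
    exact good_add (h _ (Finset.mem_insert_self _ _))
      (ih fun i hi => h i (Finset.mem_insert_of_mem hi))

lemma good_CXX : Good (C (X : Polynomial ℝ) * X) := fun n => by
  rw [coeff_C_mul, coeff_X]
  split
  · next h => simp [← h, natDegree_X]
  · simp

noncomputable def CS (p : Polynomial ℝ) : ℝ := ∑ i ∈ Finset.range (p.natDegree + 1), |p.coeff i|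

lemma CS_nonneg (p : Polynomial ℝ) : 0 ≤ CS p := Finset.sum_nonneg fun _ _ => abs_nonneg _

lemma CS_zero : CS 0 = 0 := by simp [CS]

lemma abs_eval_le {p : Polynomial ℝ} {m : ℝ} (hm : 1 ≤ m) {n : ℕ} (hd : p.natDegree ≤ n) :
    |p.eval m| ≤ CS p * m ^ n := by
  have hm0 : (0:ℝ) ≤ m := by linarith
  rw [eval_eq_sum_range, CS, Finset.sum_mul]
  refine (Finset.abs_sum_le_sum_abs _ _).trans (Finset.sum_le_sum fun i hi => ?_)
  rw [abs_mul, abs_pow, abs_of_nonneg hm0]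
  have hin : i ≤ n := (Nat.lt_succ_iff.mp (Finset.mem_range.mp hi)).trans hd
  exact mul_le_mul_of_nonneg_left (pow_le_pow_right₀ hm hin) (abs_nonneg _)

noncomputable def BB (V : Polynomial (Polynomial ℝ)) : ℝ :=
  ∑ n ∈ Finset.range (V.natDegree + 1), CS (V.coeff n)

lemma BB_nonneg (V : Polynomial (Polynomial ℝ)) : 0 ≤ BB V :=
  Finset.sum_nonneg fun _ _ => CS_nonneg _

lemma PE_trunc {V : Polynomial (Polynomial ℝ)} (hV : Good V) {m t : ℝ} (hm : 1 ≤ m)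
    (hmt : m ≤ t) (j : ℕ) :
    |PE m t V - ∑ n ∈ Finset.range (j + 1), (V.coeff n).eval m * (t⁻¹) ^ n|
      ≤ BB V * (m / t) ^ (j + 1) := by
  have ht : (0:ℝ) < t := lt_of_lt_of_le one_pos (hm.trans hmt)
  have hm0 : (0:ℝ) < m := lt_of_lt_of_le one_pos hm
  set D := max (V.natDegree + 1) (j + 1) with hD
  have hPE : PE m t V = ∑ n ∈ Finset.range D, (V.coeff n).eval m * (t⁻¹) ^ n := by
    exact eval₂_eq_sum_range' (evalRingHom m)
      (lt_of_lt_of_le (Nat.lt_succ_self _) (le_max_left _ _)) t⁻¹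
  rw [hPE, ← Finset.sum_Ico_eq_sub _ (le_max_right _ _)]
  have hq1 : m / t ≤ 1 := (div_le_one ht).mpr hmt
  have hq0 : 0 < m / t := div_pos hm0 ht
  have step1 : ∀ n ∈ Finset.Ico (j+1) D,
      |(V.coeff n).eval m * (t⁻¹) ^ n| ≤ CS (V.coeff n) * (m / t) ^ (j + 1) := by
    intro n hn
    rw [Finset.mem_Ico] at hn
    rw [abs_mul, abs_pow, abs_of_nonneg (inv_nonneg.mpr ht.le)]
    calc |(V.coeff n).eval m| * (t⁻¹) ^ n ≤ (CS (V.coeff n) * m ^ n) * (t⁻¹) ^ n := by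
          exact mul_le_mul_of_nonneg_right (abs_eval_le hm (hV n)) (by positivity)
      _ = CS (V.coeff n) * (m / t) ^ n := by rw [mul_assoc, ← mul_pow, ← div_eq_mul_inv]
      _ ≤ CS (V.coeff n) * (m / t) ^ (j + 1) := by
          exact mul_le_mul_of_nonneg_left (pow_le_pow_of_le_one hq0.le hq1 hn.1) (CS_nonneg _)
  calc |∑ n ∈ Finset.Ico (j+1) D, (V.coeff n).eval m * (t⁻¹) ^ n|
      ≤ ∑ n ∈ Finset.Ico (j+1) D, |(V.coeff n).eval m * (t⁻¹) ^ n| :=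
        Finset.abs_sum_le_sum_abs _ _
    _ ≤ ∑ n ∈ Finset.Ico (j+1) D, CS (V.coeff n) * (m / t) ^ (j + 1) :=
        Finset.sum_le_sum step1
    _ = (∑ n ∈ Finset.Ico (j+1) D, CS (V.coeff n)) * (m / t) ^ (j + 1) := by
        rw [Finset.sum_mul]
    _ ≤ BB V * (m / t) ^ (j + 1) := by
        refine mul_le_mul_of_nonneg_right ?_ (by positivity)
        have h1 : ∑ n ∈ Finset.Ico (j+1) D, CS (V.coeff n)
            ≤ ∑ n ∈ Finset.range D, CS (V.coeff n) := by
          refine Finset.sum_le_sum_of_subset_of_nonneg ?_ (fun _ _ _ => CS_nonneg _)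
          intro x hx
          rw [Finset.mem_Ico] at hx
          exact Finset.mem_range.mpr hx.2
        refine h1.trans (le_of_eq ?_)
        refine (Finset.sum_subset ?_ ?_).symm
        · exact Finset.range_subset_range.mpr (le_max_left _ _)
        · intro x _ hx2
          rw [Finset.mem_range, not_lt] at hx2
          rw [coeff_eq_zero_of_natDegree_lt (Nat.lt_of_succ_le hx2), CS_zero]

lemma PE_bound {V : Polynomial (Polynomial ℝ)} (hV : Good V) {m t : ℝ} (hm : 1 ≤ m)
    (hmt : m ≤ t) : |PE m t V| ≤ CS (V.coeff 0) + BB V := by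
  have ht : (0:ℝ) < t := lt_of_lt_of_le one_pos (hm.trans hmt)
  have h := PE_trunc hV hm hmt 0
  simp only [zero_add, Finset.range_one, Finset.sum_singleton, pow_zero, mul_one] at h
  have h0 : |(V.coeff 0).eval m| ≤ CS (V.coeff 0) := by
    simpa using abs_eval_le hm (hV 0)
  have hq1 : (m / t) ^ (0+1) ≤ 1 := by
    rw [pow_one]; exact (div_le_one ht).mpr hmt
  have hBB := BB_nonneg V
  calc |PE m t V| ≤ |PE m t V - (V.coeff 0).eval m| + |(V.coeff 0).eval m| := by
        simpa using abs_add_le (PE m t V - (V.coeff 0).eval m) ((V.coeff 0).eval m)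
    _ ≤ BB V * (m/t)^(0+1) + CS (V.coeff 0) := add_le_add h h0
    _ ≤ CS (V.coeff 0) + BB V := by nlinarith [mul_le_of_le_one_right hBB hq1]

lemma pow_abs_sub_pow_le {x y B : ℝ} (hB : 1 ≤ B) (hx : |x| ≤ B) (hy : |y| ≤ B) (m : ℕ) :
    |x ^ m - y ^ m| ≤ m * B ^ m * |x - y| := by
  induction m with
  | zero => simp
  | succ m ih =>
    have hB0 : (0:ℝ) ≤ B := by linarith
    have key : x ^ (m+1) - y ^ (m+1) = x ^ m * (x - y) + (x ^ m - y ^ m) * y := by ring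
    rw [key]
    have h1 : |x ^ m * (x - y)| ≤ B ^ m * |x - y| := by
      rw [abs_mul, abs_pow]
      exact mul_le_mul_of_nonneg_right (pow_le_pow_left₀ (abs_nonneg _) hx m) (abs_nonneg _)
    have h2 : |(x ^ m - y ^ m) * y| ≤ (m * B ^ m * |x - y|) * B := by
      rw [abs_mul]
      exact mul_le_mul ih hy (abs_nonneg _) (by positivity)
    have h3 : B ^ m ≤ B ^ (m+1) := pow_le_pow_right₀ hB (Nat.le_succ m)
    calc |x ^ m * (x - y) + (x ^ m - y ^ m) * y| ≤ |x ^ m * (x - y)| + |(x ^ m - y ^ m) * y| :=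
          abs_add_le _ _
      _ ≤ B ^ m * |x - y| + (m * B ^ m * |x - y|) * B := add_le_add h1 h2
      _ ≤ B ^ (m+1) * |x - y| + m * B ^ (m+1) * |x - y| := by
          refine add_le_add (mul_le_mul_of_nonneg_right h3 (abs_nonneg _)) ?_
          have h4 : (m : ℝ) * B ^ m * |x - y| * B = (m : ℝ) * (B ^ m * B) * |x - y| := by ring
          rw [h4, ← pow_succ]
      _ = (↑(m+1)) * B ^ (m+1) * |x - y| := by push_cast; ring

section Approx

variable (Mf Tf : ℝ → ℝ)

def Approx (f : ℝ → ℝ) (V : Polynomial (Polynomial ℝ)) (j : ℕ) : Prop :=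
  Good V ∧ ∃ C : ℝ, ∀ᶠ k in atTop, |f k - PE (Mf k) (Tf k) V| ≤ C * (Mf k / Tf k) ^ (j + 1)

variable {Mf Tf}

lemma basic_facts (hMT : ∀ᶠ k in atTop, 1 ≤ Mf k ∧ Mf k ≤ Tf k) : ∀ᶠ k in atTop, 1 ≤ Mf k ∧ Mf k ≤ Tf k ∧ 0 < Tf k ∧
    0 < Mf k / Tf k ∧ Mf k / Tf k ≤ 1 ∧ (Tf k)⁻¹ ≤ Mf k / Tf k ∧ (Tf k)⁻¹ ≤ 1 := by
  filter_upwards [hMT] with k hk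
  obtain ⟨h1, h2⟩ := hk
  have hT : 0 < Tf k := lt_of_lt_of_le one_pos (h1.trans h2)
  have hM : 0 < Mf k := lt_of_lt_of_le one_pos h1
  refine ⟨h1, h2, hT, div_pos hM hT, (div_le_one hT).mpr h2, ?_, ?_⟩
  · rw [div_eq_mul_inv]
    nlinarith [inv_pos.mpr hT]
  · rw [inv_le_one_iff₀]
    right
    exact h1.trans h2

lemma approx_congr {f g : ℝ → ℝ} {V j} (hfg : ∀ᶠ k in atTop, f k = g k)
    (hf : Approx Mf Tf f V j) : Approx Mf Tf g V j := by
  obtain ⟨hg, C, hC⟩ := hf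
  refine ⟨hg, C, ?_⟩
  filter_upwards [hC, hfg] with k h1 h2
  rwa [← h2]

lemma approx_exact {f : ℝ → ℝ} {V} (hg : Good V)
    (h : ∀ᶠ k in atTop, f k = PE (Mf k) (Tf k) V) (j : ℕ) : Approx Mf Tf f V j := by
  refine ⟨hg, 0, ?_⟩
  filter_upwards [h] with k hk
  rw [hk, sub_self, abs_zero, zero_mul]

lemma approx_add {f g : ℝ → ℝ} {V W j} (hf : Approx Mf Tf f V j) (hg : Approx Mf Tf g W j) :
    Approx Mf Tf (fun k => f k + g k) (V + W) j := by
  obtain ⟨hV, C1, hC1⟩ := hf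
  obtain ⟨hW, C2, hC2⟩ := hg
  refine ⟨good_add hV hW, C1 + C2, ?_⟩
  filter_upwards [hC1, hC2] with k h1 h2
  rw [map_add, add_mul]
  calc |f k + g k - (PE (Mf k) (Tf k) V + PE (Mf k) (Tf k) W)|
      ≤ |f k - PE (Mf k) (Tf k) V| + |g k - PE (Mf k) (Tf k) W| := by
        rw [show f k + g k - (PE (Mf k) (Tf k) V + PE (Mf k) (Tf k) W)
          = (f k - PE (Mf k) (Tf k) V) + (g k - PE (Mf k) (Tf k) W) by ring]
        exact abs_add_le _ _
    _ ≤ _ := add_le_add h1 h2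

lemma approx_Cmul {f : ℝ → ℝ} {V j} (c : ℝ) (hf : Approx Mf Tf f V j) :
    Approx Mf Tf (fun k => c * f k) (C (C c) * V) j := by
  obtain ⟨hV, C1, hC1⟩ := hf
  refine ⟨good_mul (good_CC c) hV, |c| * C1, ?_⟩
  filter_upwards [hC1] with k h1
  rw [map_mul, PE_CC]
  calc |c * f k - c * PE (Mf k) (Tf k) V| = |c| * |f k - PE (Mf k) (Tf k) V| := by
        rw [← abs_mul, mul_sub]
    _ ≤ |c| * (C1 * (Mf k / Tf k) ^ (j+1)) := mul_le_mul_of_nonneg_left h1 (abs_nonneg _)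
    _ = |c| * C1 * (Mf k / Tf k) ^ (j+1) := by ring

lemma approx_neg {f : ℝ → ℝ} {V j} (hf : Approx Mf Tf f V j) :
    Approx Mf Tf (fun k => -f k) (-V) j := by
  have h := approx_Cmul (-1) hf
  have hE : C (C (-1 : ℝ)) * V = -V := by
    rw [show (C (C (-1:ℝ))) = -1 by simp]
    ring
  rw [hE] at h
  exact approx_congr (by filter_upwards with k; ring) h

lemma approx_sub {f g : ℝ → ℝ} {V W j} (hf : Approx Mf Tf f V j) (hg : Approx Mf Tf g W j) :
    Approx Mf Tf (fun k => f k - g k) (V - W) j := by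
  have h := approx_add hf (approx_neg hg)
  rw [sub_eq_add_neg]
  exact approx_congr (by filter_upwards with k; ring) h

lemma approx_sum {ι : Type*} (s : Finset ι) (f : ι → ℝ → ℝ) (V : ι → Polynomial (Polynomial ℝ))
    {j} (h : ∀ i ∈ s, Approx Mf Tf (f i) (V i) j) :
    Approx Mf Tf (fun k => ∑ i ∈ s, f i k) (∑ i ∈ s, V i) j := by
  classical
  induction s using Finset.induction_on with
  | empty =>
    simp only [Finset.sum_empty]
    exact approx_exact good_zero (by filter_upwards with k; simp) j
  | insert _ _ hx ih =>
    rename_i i s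
    rw [Finset.sum_insert hx]
    refine approx_congr ?_ (approx_add (h _ (Finset.mem_insert_self _ _))
      (ih fun i hi => h i (Finset.mem_insert_of_mem hi)))
    filter_upwards with k
    rw [Finset.sum_insert hx]

lemma approx_pow (hMT : ∀ᶠ k in atTop, 1 ≤ Mf k ∧ Mf k ≤ Tf k) {f : ℝ → ℝ} {V j} (hf : Approx Mf Tf f V j) {B : ℝ}
    (hB : ∀ᶠ k in atTop, |f k| ≤ B) (m : ℕ) :
    Approx Mf Tf (fun k => f k ^ m) (V ^ m) j := by
  obtain ⟨hV, C1, hC1⟩ := hf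
  set B' := max 1 (max B (CS (V.coeff 0) + BB V)) with hB'
  have hB'1 : (1:ℝ) ≤ B' := le_max_left _ _
  refine ⟨good_pow hV m, m * B' ^ m * |C1|, ?_⟩
  filter_upwards [hC1, hB, basic_facts hMT] with k h1 h2 h3
  have hq0 : 0 < Mf k / Tf k := h3.2.2.2.1
  have hPE : |PE (Mf k) (Tf k) V| ≤ B' :=
    (PE_bound hV h3.1 h3.2.1).trans ((le_max_right B _).trans (le_max_right _ _))
  have hfk : |f k| ≤ B' := h2.trans ((le_max_left B _).trans (le_max_right _ _))
  rw [map_pow]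
  calc |f k ^ m - PE (Mf k) (Tf k) V ^ m| ≤ m * B' ^ m * |f k - PE (Mf k) (Tf k) V| :=
        pow_abs_sub_pow_le hB'1 hfk hPE m
    _ ≤ m * B' ^ m * (|C1| * (Mf k / Tf k) ^ (j+1)) := by
        refine mul_le_mul_of_nonneg_left (h1.trans ?_) (by positivity)
        exact mul_le_mul_of_nonneg_right (le_abs_self _) (pow_nonneg hq0.le _)
    _ = m * B' ^ m * |C1| * (Mf k / Tf k) ^ (j+1) := by ring

lemma approx_Ymul_same (hMT : ∀ᶠ k in atTop, 1 ≤ Mf k ∧ Mf k ≤ Tf k) {f : ℝ → ℝ} {V j} (hf : Approx Mf Tf f V j) :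
    Approx Mf Tf (fun k => (Tf k)⁻¹ * f k) (X * V) j := by
  obtain ⟨hV, C1, hC1⟩ := hf
  refine ⟨good_mul good_X hV, |C1|, ?_⟩
  filter_upwards [hC1, basic_facts hMT] with k h1 h3
  have hq0 : 0 < Mf k / Tf k := h3.2.2.2.1
  rw [map_mul, PE_X]
  have hT0 : (0:ℝ) ≤ (Tf k)⁻¹ := inv_nonneg.mpr h3.2.2.1.le
  calc |(Tf k)⁻¹ * f k - (Tf k)⁻¹ * PE (Mf k) (Tf k) V|
      = (Tf k)⁻¹ * |f k - PE (Mf k) (Tf k) V| := by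
        rw [← mul_sub, abs_mul, abs_of_nonneg hT0]
    _ ≤ 1 * (|C1| * (Mf k / Tf k) ^ (j+1)) := by
        refine mul_le_mul h3.2.2.2.2.2.2 (h1.trans ?_) (abs_nonneg _) one_pos.le
        exact mul_le_mul_of_nonneg_right (le_abs_self _) (pow_nonneg hq0.le _)
    _ = |C1| * (Mf k / Tf k) ^ (j+1) := by ring

lemma approx_Ymul_up (hMT : ∀ᶠ k in atTop, 1 ≤ Mf k ∧ Mf k ≤ Tf k) {f : ℝ → ℝ} {V j} (hf : Approx Mf Tf f V j) :
    Approx Mf Tf (fun k => (Tf k)⁻¹ * f k) (X * V) (j + 1) := by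
  obtain ⟨hV, C1, hC1⟩ := hf
  refine ⟨good_mul good_X hV, |C1|, ?_⟩
  filter_upwards [hC1, basic_facts hMT] with k h1 h3
  have hq0 : 0 < Mf k / Tf k := h3.2.2.2.1
  rw [map_mul, PE_X]
  have hT0 : (0:ℝ) ≤ (Tf k)⁻¹ := inv_nonneg.mpr h3.2.2.1.le
  calc |(Tf k)⁻¹ * f k - (Tf k)⁻¹ * PE (Mf k) (Tf k) V|
      = (Tf k)⁻¹ * |f k - PE (Mf k) (Tf k) V| := by
        rw [← mul_sub, abs_mul, abs_of_nonneg hT0]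
    _ ≤ (Mf k / Tf k) * (|C1| * (Mf k / Tf k) ^ (j+1)) := by
        refine mul_le_mul h3.2.2.2.2.2.1 (h1.trans ?_) (abs_nonneg _) h3.2.2.2.1.le
        exact mul_le_mul_of_nonneg_right (le_abs_self _) (pow_nonneg hq0.le _)
    _ = |C1| * (Mf k / Tf k) ^ (j+1+1) := by ring

lemma approx_Ypow_mul (hMT : ∀ᶠ k in atTop, 1 ≤ Mf k ∧ Mf k ≤ Tf k) {f : ℝ → ℝ} {V j} (hf : Approx Mf Tf f V j) (m : ℕ) :
    Approx Mf Tf (fun k => ((Tf k)⁻¹) ^ m * f k) (X ^ m * V) j := by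
  induction m with
  | zero =>
    rw [pow_zero, one_mul]
    exact approx_congr (by filter_upwards with k; rw [pow_zero, one_mul]) hf
  | succ m ih =>
    have h := approx_Ymul_same hMT ih
    have hE : X * (X ^ m * V) = X ^ (m+1) * V := by ring
    rw [hE] at h
    refine approx_congr ?_ h
    filter_upwards with k
    rw [pow_succ]
    ring

lemma approx_comp (hMT : ∀ᶠ k in atTop, 1 ≤ Mf k ∧ Mf k ≤ Tf k) {g : ℝ → ℝ} {W : Polynomial (Polynomial ℝ)} {j : ℕ}
    (F : ℝ → ℝ) (coef : ℕ → ℝ) (K : ℝ)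
    (hF : ∀ x : ℝ, |x| ≤ 1/2 → |F x - ∑ m ∈ Finset.range (j+1), coef m * x ^ m|
        ≤ K * |x| ^ (j+1))
    (hg : Approx Mf Tf g W j) (c : ℝ)
    (hsmall : ∀ᶠ k in atTop, |g k| ≤ c * (Mf k / Tf k))
    (hhalf : ∀ᶠ k in atTop, |g k| ≤ 1/2) :
    Approx Mf Tf (fun k => F (g k))
      (∑ m ∈ Finset.range (j+1), C (C (coef m)) * W ^ m) j := by
  obtain ⟨hW, C1, hC1⟩ := hg
  set B' := max 1 (CS (W.coeff 0) + BB W) with hB'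
  have hB'1 : (1:ℝ) ≤ B' := le_max_left _ _
  refine ⟨good_sum _ _ fun m _ => good_mul (good_CC _) (good_pow hW m),
    |K| * |c| ^ (j+1) + (∑ m ∈ Finset.range (j+1), |coef m| * m * B' ^ m) * |C1|, ?_⟩
  filter_upwards [hC1, hsmall, hhalf, basic_facts hMT] with k h1 h2 h3 h4
  have hq0 : 0 < Mf k / Tf k := h4.2.2.2.1
  have hPEW : |PE (Mf k) (Tf k) W| ≤ B' :=
    (PE_bound hW h4.1 h4.2.1).trans (le_max_right _ _)
  have hgB : |g k| ≤ B' := h3.trans (by linarith)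
  have hPEsum : PE (Mf k) (Tf k) (∑ m ∈ Finset.range (j+1), C (C (coef m)) * W ^ m)
      = ∑ m ∈ Finset.range (j+1), coef m * (PE (Mf k) (Tf k) W) ^ m := by
    rw [map_sum]
    refine Finset.sum_congr rfl fun m _ => ?_
    rw [map_mul, map_pow, PE_CC]
  rw [hPEsum]
  have key : |F (g k) - ∑ m ∈ Finset.range (j+1), coef m * (PE (Mf k) (Tf k) W) ^ m|
      ≤ |F (g k) - ∑ m ∈ Finset.range (j+1), coef m * g k ^ m|
        + ∑ m ∈ Finset.range (j+1), |coef m| * |g k ^ m - (PE (Mf k) (Tf k) W) ^ m| := by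
    have e1 : F (g k) - ∑ m ∈ Finset.range (j+1), coef m * (PE (Mf k) (Tf k) W) ^ m
        = (F (g k) - ∑ m ∈ Finset.range (j+1), coef m * g k ^ m)
          + ∑ m ∈ Finset.range (j+1), coef m * (g k ^ m - (PE (Mf k) (Tf k) W) ^ m) := by
      have e2 : ∑ m ∈ Finset.range (j+1), coef m * (g k ^ m - (PE (Mf k) (Tf k) W) ^ m)
          = (∑ m ∈ Finset.range (j+1), coef m * g k ^ m)
            - ∑ m ∈ Finset.range (j+1), coef m * (PE (Mf k) (Tf k) W) ^ m := by
        rw [← Finset.sum_sub_distrib]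
        exact Finset.sum_congr rfl fun m _ => by ring
      rw [e2]
      ring
    rw [e1]
    refine (abs_add_le _ _).trans (add_le_add_right ?_ _)
    refine (Finset.abs_sum_le_sum_abs _ _).trans (Finset.sum_le_sum fun m _ => ?_)
    rw [abs_mul]
  have term1 : |F (g k) - ∑ m ∈ Finset.range (j+1), coef m * g k ^ m|
      ≤ |K| * |c| ^ (j+1) * (Mf k / Tf k) ^ (j+1) := by
    refine (hF (g k) h3).trans ?_
    have : |g k| ^ (j+1) ≤ (|c| * (Mf k / Tf k)) ^ (j+1) := by
      refine pow_le_pow_left₀ (abs_nonneg _) (h2.trans ?_) _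
      exact mul_le_mul_of_nonneg_right (le_abs_self _) hq0.le
    calc K * |g k| ^ (j+1) ≤ |K| * |g k| ^ (j+1) :=
          mul_le_mul_of_nonneg_right (le_abs_self _) (pow_nonneg (abs_nonneg _) _)
      _ ≤ |K| * (|c| * (Mf k / Tf k)) ^ (j+1) :=
          mul_le_mul_of_nonneg_left this (abs_nonneg _)
      _ = |K| * |c| ^ (j+1) * (Mf k / Tf k) ^ (j+1) := by rw [mul_pow]; ring
  have term2 : ∑ m ∈ Finset.range (j+1), |coef m| * |g k ^ m - (PE (Mf k) (Tf k) W) ^ m|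
      ≤ (∑ m ∈ Finset.range (j+1), |coef m| * m * B' ^ m) * |C1| * (Mf k / Tf k) ^ (j+1) := by
    rw [Finset.sum_mul, Finset.sum_mul]
    refine Finset.sum_le_sum fun m _ => ?_
    have hpd := pow_abs_sub_pow_le hB'1 hgB hPEW m
    have hd : |g k - PE (Mf k) (Tf k) W| ≤ |C1| * (Mf k / Tf k) ^ (j+1) :=
      h1.trans (mul_le_mul_of_nonneg_right (le_abs_self _) (pow_nonneg hq0.le _))
    calc |coef m| * |g k ^ m - (PE (Mf k) (Tf k) W) ^ m|
        ≤ |coef m| * (m * B' ^ m * |g k - PE (Mf k) (Tf k) W|) :=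
          mul_le_mul_of_nonneg_left hpd (abs_nonneg _)
      _ ≤ |coef m| * (m * B' ^ m * (|C1| * (Mf k / Tf k) ^ (j+1))) := by
          refine mul_le_mul_of_nonneg_left ?_ (abs_nonneg _)
          exact mul_le_mul_of_nonneg_left hd (by positivity)
      _ = |coef m| * m * B' ^ m * |C1| * (Mf k / Tf k) ^ (j+1) := by ring
  calc |F (g k) - ∑ m ∈ Finset.range (j+1), coef m * (PE (Mf k) (Tf k) W) ^ m|
      ≤ _ + _ := key
    _ ≤ |K| * |c| ^ (j+1) * (Mf k / Tf k) ^ (j+1)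
        + (∑ m ∈ Finset.range (j+1), |coef m| * m * B' ^ m) * |C1| * (Mf k / Tf k) ^ (j+1) :=
        add_le_add term1 term2
    _ = _ := by ring

end Approx
lemma log_taylor_bound (j : ℕ) : ∀ x : ℝ, |x| ≤ 1/2 →
    |Real.log (1 + x) - ∑ m ∈ Finset.range (j+1), ((-1:ℝ)^(m+1)/m) * x ^ m|
      ≤ 2 * |x| ^ (j+1) := by
  intro x hx
  have hxnn := abs_nonneg x
  have hx1 : |(-x)| < 1 := by rw [abs_neg]; linarith
  have h := Real.abs_log_sub_add_sum_range_le hx1 j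
  rw [abs_neg, sub_neg_eq_add] at h
  have hsum : ∑ m ∈ Finset.range (j+1), ((-1:ℝ)^(m+1)/m) * x ^ m
      = -∑ i ∈ Finset.range j, (-x) ^ (i+1) / (i+1) := by
    rw [Finset.sum_range_succ', ← Finset.sum_neg_distrib]
    have h0 : ((-1:ℝ)^(0+1)/((0:ℕ):ℝ)) * x ^ 0 = 0 := by norm_num
    rw [h0, add_zero]
    refine Finset.sum_congr rfl fun i _ => ?_
    rw [neg_pow x (i+1)]
    push_cast
    ring
  rw [hsum, sub_neg_eq_add]
  rw [add_comm] at h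
  refine h.trans ?_
  have h2 : 1 - |x| ≥ 1/2 := by linarith
  calc |x| ^ (j+1) / (1 - |x|) ≤ |x| ^ (j+1) / (1/2) := by
        refine div_le_div_of_nonneg_left (by positivity) (by norm_num) h2
    _ = 2 * |x| ^ (j+1) := by ring

lemma geom_taylor_bound (j : ℕ) : ∀ x : ℝ, |x| ≤ 1/2 →
    |(1 + x)⁻¹ - ∑ m ∈ Finset.range (j+1), ((-1:ℝ)^m) * x ^ m|
      ≤ 2 * |x| ^ (j+1) := by
  intro x hx
  have hxb := abs_le.mp hx
  have h1x : (0:ℝ) < 1 + x := by linarith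
  have hne : (-x : ℝ) ≠ 1 := by
    intro hc
    have hx1 : x = -1 := by linarith
    rw [hx1] at hx
    norm_num at hx
  have hsum : ∑ m ∈ Finset.range (j+1), ((-1:ℝ)^m) * x ^ m
      = ((-x) ^ (j+1) - 1) / (-x - 1) := by
    rw [← geom_sum_eq hne (j+1)]
    refine Finset.sum_congr rfl fun m _ => ?_
    rw [neg_pow x m]
  rw [hsum]
  have key : (1 + x)⁻¹ - ((-x) ^ (j+1) - 1) / (-x - 1) = (-x) ^ (j+1) / (1 + x) := by
    have hne2 : -x - 1 ≠ 0 := by intro hc; apply h1x.ne'; linarith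
    field_simp
    ring
  rw [key, abs_div, abs_pow, abs_neg, abs_of_pos h1x]
  calc |x| ^ (j+1) / (1 + x) ≤ |x| ^ (j+1) / (1/2) := by
        refine div_le_div_of_nonneg_left (by positivity) (by norm_num) (by linarith)
    _ = 2 * |x| ^ (j+1) := by ring

lemma main_ind {Mf Tf u : ℝ → ℝ} {α β : ℝ} (hα : 0 < α) (N : ℕ) {a : ℕ → ℝ} (ha0 : 0 < a 0)
    (hMT : ∀ᶠ k in atTop, 1 ≤ Mf k ∧ Mf k ≤ Tf k)
    (hq0 : Tendsto (fun k => Mf k / Tf k) atTop (𝓝 0))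
    (hT : Tendsto Tf atTop atTop)
    {K : ℝ} (hu : ∀ᶠ k in atTop, |u k - α⁻¹| ≤ K * (Mf k / Tf k))
    (heq : ∀ᶠ k in atTop, u k = α⁻¹ + (α * Tf k)⁻¹ *
      (Mf k + β + Real.log (u k) -
        Real.log (∑ n ∈ Finset.range (N+2), a n * ((u k * Tf k)⁻¹) ^ n))) :
    ∀ j : ℕ, ∃ V, Approx Mf Tf u V j ∧ V.coeff 0 = C α⁻¹ := by
  set SS : ℝ → ℝ := fun k => ∑ n ∈ Finset.range (N+2), a n * ((u k * Tf k)⁻¹) ^ n with hSS_def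
  -- preliminary eventual facts
  have hgsmall : ∀ᶠ k in atTop, |α * u k - 1| ≤ (α * K) * (Mf k / Tf k) := by
    filter_upwards [hu] with k hk
    have h1 : α * u k - 1 = α * (u k - α⁻¹) := by
      rw [mul_sub, mul_inv_cancel₀ hα.ne']
    rw [h1, abs_mul, abs_of_pos hα]
    calc α * |u k - α⁻¹| ≤ α * (K * (Mf k / Tf k)) := mul_le_mul_of_nonneg_left hk hα.le
      _ = (α * K) * (Mf k / Tf k) := by ring
  have hghalf : ∀ᶠ k in atTop, |α * u k - 1| ≤ 1/2 := by
    have h2 : Tendsto (fun k => (α * K) * (Mf k / Tf k)) atTop (𝓝 0) := by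
      simpa using hq0.const_mul (α * K)
    filter_upwards [hgsmall, h2.eventually (eventually_le_nhds (by norm_num : (0:ℝ) < 1/2))]
      with k hk1 hk2
    exact hk1.trans hk2
  have hupos : ∀ᶠ k in atTop, 0 < u k ∧ |(u k)⁻¹| ≤ 2 * α := by
    filter_upwards [hghalf] with k hk
    obtain ⟨hk1, hk2⟩ := abs_le.mp hk
    have hau : 1/2 ≤ α * u k := by linarith
    have hu0 : 0 < u k := by nlinarith
    have hinv : (u k)⁻¹ ≤ 2 * α := by
      have hmul : u k * (u k)⁻¹ = 1 := mul_inv_cancel₀ hu0.ne'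
      nlinarith [inv_pos.mpr hu0]
    refine ⟨hu0, ?_⟩
    rw [abs_of_pos (inv_pos.mpr hu0)]
    exact hinv
  intro j
  induction j with
  | zero =>
    refine ⟨C (C α⁻¹), ⟨good_CC _, K, ?_⟩, coeff_C_zero⟩
    filter_upwards [hu] with k hk
    rw [PE_CC]
    simpa using hk
  | succ j ih =>
    obtain ⟨V, hV, hV0⟩ := ih
    set g : ℝ → ℝ := fun k => α * u k - 1 with hg_def
    set Wg := C (C α) * V - 1 with hWg_def
    have hWgapp : Approx Mf Tf g Wg j := by
      have h1 := approx_Cmul α hV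
      have h2 : Approx Mf Tf (fun _ => (-1:ℝ)) (-1) j :=
        approx_exact (good_neg good_one) (by filter_upwards with k; rw [map_neg, map_one]) j
      have h3 := approx_add h1 h2
      rw [hWg_def, sub_eq_add_neg]
      refine approx_congr ?_ h3
      filter_upwards with k
      rw [hg_def]
      ring
    -- log u
    set WL := (∑ m ∈ Finset.range (j+1), C (C ((-1:ℝ)^(m+1)/m)) * Wg ^ m)
      + C (C (-Real.log α)) with hWL_def
    have hlogu : Approx Mf Tf (fun k => Real.log (u k)) WL j := by
      have hcomp := approx_comp hMT (fun x => Real.log (1+x)) (fun m => (-1:ℝ)^(m+1)/m) 2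
        (log_taylor_bound j) hWgapp (α * K) hgsmall hghalf
      have hconst : Approx Mf Tf (fun _ => -Real.log α) (C (C (-Real.log α))) j :=
        approx_exact (good_CC _) (by filter_upwards with k; rw [PE_CC]) j
      have h4 := approx_add hcomp hconst
      refine approx_congr ?_ h4
      filter_upwards [hupos] with k hk
      have h1 : (1:ℝ) + g k = α * u k := by rw [hg_def]; ring
      rw [h1, Real.log_mul hα.ne' hk.1.ne']
      ring
    -- u⁻¹
    set WI := C (C α) * (∑ m ∈ Finset.range (j+1), C (C ((-1:ℝ)^m)) * Wg ^ m) with hWI_def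
    have hinvu : Approx Mf Tf (fun k => (u k)⁻¹) WI j := by
      have hcomp := approx_comp hMT (fun x => (1+x)⁻¹) (fun m => (-1:ℝ)^m) 2
        (geom_taylor_bound j) hWgapp (α * K) hgsmall hghalf
      have h4 := approx_Cmul α hcomp
      refine approx_congr ?_ h4
      filter_upwards [hupos] with k hk
      have h1 : (1:ℝ) + g k = α * u k := by rw [hg_def]; ring
      rw [h1, mul_inv, ← mul_assoc, mul_inv_cancel₀ hα.ne', one_mul]
    -- G
    set G : ℝ → ℝ := fun k => ∑ n ∈ Finset.range (N+1),
      (a (n+1) / a 0) * (((Tf k)⁻¹) ^ (n+1) * ((u k)⁻¹) ^ (n+1)) with hG_def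
    set WG := ∑ n ∈ Finset.range (N+1), C (C (a (n+1) / a 0)) * (X ^ (n+1) * WI ^ (n+1))
      with hWG_def
    have hGapp : Approx Mf Tf G WG j := by
      apply approx_sum
      intro n _
      have h1 := approx_pow hMT hinvu (B := 2 * α)
        (by filter_upwards [hupos] with k hk; exact hk.2) (n+1)
      have h2 := approx_Ypow_mul hMT h1 (n+1)
      exact approx_Cmul _ h2
    set cG : ℝ := ∑ n ∈ Finset.range (N+1), |a (n+1) / a 0| * (2*α) ^ (n+1) with hcG_def
    have hcG0 : 0 ≤ cG := Finset.sum_nonneg fun n _ => by positivity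
    have hGsmall : ∀ᶠ k in atTop, |G k| ≤ cG * (Tf k)⁻¹ := by
      filter_upwards [hupos, basic_facts hMT] with k hk hb
      have ht0 : 0 ≤ (Tf k)⁻¹ := inv_nonneg.mpr hb.2.2.1.le
      have ht1 : (Tf k)⁻¹ ≤ 1 := hb.2.2.2.2.2.2
      rw [hG_def]
      refine (Finset.abs_sum_le_sum_abs _ _).trans ?_
      rw [hcG_def, Finset.sum_mul]
      refine Finset.sum_le_sum fun n _ => ?_
      rw [abs_mul, abs_mul, abs_pow, abs_pow, abs_of_nonneg ht0]
      have e1 : ((Tf k)⁻¹) ^ (n+1) ≤ (Tf k)⁻¹ := by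
        rw [pow_succ]
        refine mul_le_of_le_one_left ht0 (pow_le_one₀ ht0 ht1)
      have e2 : |(u k)⁻¹| ^ (n+1) ≤ (2*α) ^ (n+1) :=
        pow_le_pow_left₀ (abs_nonneg _) hk.2 _
      calc |a (n+1) / a 0| * (((Tf k)⁻¹) ^ (n+1) * |(u k)⁻¹| ^ (n+1))
          ≤ |a (n+1) / a 0| * ((Tf k)⁻¹ * (2*α) ^ (n+1)) := by
            refine mul_le_mul_of_nonneg_left ?_ (abs_nonneg _)
            exact mul_le_mul e1 e2 (by positivity) ht0
        _ = |a (n+1) / a 0| * (2*α) ^ (n+1) * (Tf k)⁻¹ := by ring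
    have hGq : ∀ᶠ k in atTop, |G k| ≤ cG * (Mf k / Tf k) := by
      filter_upwards [hGsmall, basic_facts hMT] with k hk hb
      exact hk.trans (mul_le_mul_of_nonneg_left hb.2.2.2.2.2.1 hcG0)
    have hGhalf : ∀ᶠ k in atTop, |G k| ≤ 1/2 := by
      have h2 : Tendsto (fun k => cG * (Tf k)⁻¹) atTop (𝓝 0) := by
        simpa using (tendsto_inv_atTop_zero.comp hT).const_mul cG
      filter_upwards [hGsmall,
        h2.eventually (eventually_le_nhds (by norm_num : (0:ℝ) < 1/2))] with k h3 h4
      exact h3.trans h4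
    have hSSeq : ∀ᶠ k in atTop, SS k = a 0 * (1 + G k) := by
      filter_upwards with k
      simp only [hSS_def]
      rw [Finset.sum_range_succ']
      have h0 : a 0 * ((u k * Tf k)⁻¹) ^ 0 = a 0 := by rw [pow_zero, mul_one]
      rw [h0]
      have hterm : ∀ n ∈ Finset.range (N+1), a (n+1) * ((u k * Tf k)⁻¹) ^ (n+1)
          = a 0 * ((a (n+1) / a 0) * (((Tf k)⁻¹) ^ (n+1) * ((u k)⁻¹) ^ (n+1))) := by
        intro n _
        have e3 : a 0 * (a (n+1) / a 0) = a (n+1) := by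
          rw [mul_comm]
          exact div_mul_cancel₀ _ ha0.ne'
        rw [mul_inv, mul_pow]
        linear_combination (((Tf k)⁻¹) ^ (n+1) * ((u k)⁻¹) ^ (n+1)) * e3.symm
      rw [Finset.sum_congr rfl hterm, ← Finset.mul_sum]
      simp only [hG_def]
      ring
    -- log SS
    set WlogS := C (C (Real.log (a 0)))
      + (∑ m ∈ Finset.range (j+1), C (C ((-1:ℝ)^(m+1)/m)) * WG ^ m) with hWlogS_def
    have hlogS : Approx Mf Tf (fun k => Real.log (SS k)) WlogS j := by
      have hcomp := approx_comp hMT (fun x => Real.log (1+x)) (fun m => (-1:ℝ)^(m+1)/m) 2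
        (log_taylor_bound j) hGapp cG hGq hGhalf
      have hconst : Approx Mf Tf (fun _ => Real.log (a 0)) (C (C (Real.log (a 0)))) j :=
        approx_exact (good_CC _) (by filter_upwards with k; rw [PE_CC]) j
      have h4 := approx_add hconst hcomp
      refine approx_congr ?_ h4
      filter_upwards [hSSeq, hGhalf] with k hk1 hk2
      have hGpos : (0:ℝ) < 1 + G k := by
        have := (abs_le.mp hk2).1
        linarith
      rw [hk1, Real.log_mul ha0.ne' hGpos.ne']
    -- assemble
    have hdiff : Approx Mf Tf (fun k => α⁻¹ * (Real.log (u k) - Real.log (SS k)))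
        (C (C α⁻¹) * (WL - WlogS)) j := approx_Cmul _ (approx_sub hlogu hlogS)
    have hA3 := approx_Ymul_up hMT hdiff
    have hA1 : Approx Mf Tf (fun _ => α⁻¹) (C (C α⁻¹)) (j+1) :=
      approx_exact (good_CC _) (by filter_upwards with k; rw [PE_CC]) _
    have hA2 : Approx Mf Tf (fun k => α⁻¹ * (Mf k * (Tf k)⁻¹) + (β/α) * (Tf k)⁻¹)
        (C (C α⁻¹) * (C (Polynomial.X : Polynomial ℝ) * X) + C (C (β/α)) * X) (j+1) := by
      refine approx_exact (good_add (good_mul (good_CC _) good_CXX)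
        (good_mul (good_CC _) good_X)) ?_ _
      filter_upwards with k
      simp only [map_add, map_mul, PE_CC, PE_C, PE_X, eval_X, eval_C]
    refine ⟨C (C α⁻¹) + (C (C α⁻¹) * (C (Polynomial.X : Polynomial ℝ) * X) + C (C (β/α)) * X)
      + X * (C (C α⁻¹) * (WL - WlogS)), ?_, ?_⟩
    · have h5 := approx_add (approx_add hA1 hA2) hA3
      refine approx_congr ?_ h5
      filter_upwards [heq] with k hk
      simp only [hSS_def]
      linear_combination -hk
    · simp [mul_coeff_zero, coeff_X_zero]
lemma main_abstract {Mf Tf u : ℝ → ℝ} {α β : ℝ} (hα : 0 < α) (N : ℕ) {a : ℕ → ℝ}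
    (ha0 : 0 < a 0)
    (hMT : ∀ᶠ k in atTop, 1 ≤ Mf k ∧ Mf k ≤ Tf k)
    (hq0 : Tendsto (fun k => Mf k / Tf k) atTop (𝓝 0))
    (hT : Tendsto Tf atTop atTop)
    {K : ℝ} (hu : ∀ᶠ k in atTop, |u k - α⁻¹| ≤ K * (Mf k / Tf k))
    (heq : ∀ᶠ k in atTop, u k = α⁻¹ + (α * Tf k)⁻¹ *
      (Mf k + β + Real.log (u k) -
        Real.log (∑ n ∈ Finset.range (N+2), a n * ((u k * Tf k)⁻¹) ^ n))) :
    ∃ b : ℕ → Polynomial ℝ, (∀ n, (b n).natDegree ≤ n) ∧ b 0 = C α⁻¹ ∧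
      ∃ C > (0:ℝ), ∀ᶠ k in atTop,
        |u k - ∑ n ∈ Finset.range (N+1), (b n).eval (Mf k) / (Tf k) ^ n|
          ≤ C * (Mf k / Tf k) ^ (N+1) := by
  obtain ⟨V, ⟨hgood, C1, hC1⟩, hV0⟩ := main_ind hα N ha0 hMT hq0 hT hu heq N
  refine ⟨fun n => V.coeff n, fun n => hgood n, hV0, |C1| + BB V + 1, by linarith [BB_nonneg V, abs_nonneg C1], ?_⟩
  filter_upwards [hC1, hMT] with k h1 h2
  have hTpos : 0 < Tf k := lt_of_lt_of_le one_pos (h2.1.trans h2.2)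
  have hMpos : 0 < Mf k := lt_of_lt_of_le one_pos h2.1
  have hqnn : 0 ≤ (Mf k / Tf k) ^ (N+1) := pow_nonneg (div_pos hMpos hTpos).le _
  have htr := PE_trunc hgood h2.1 h2.2 N
  have hsum_eq : ∑ n ∈ Finset.range (N+1), (V.coeff n).eval (Mf k) / (Tf k) ^ n
      = ∑ n ∈ Finset.range (N+1), (V.coeff n).eval (Mf k) * ((Tf k)⁻¹) ^ n := by
    refine Finset.sum_congr rfl fun n _ => ?_
    rw [div_eq_mul_inv, inv_pow]
  rw [hsum_eq]
  have h1' : |u k - PE (Mf k) (Tf k) V| ≤ |C1| * (Mf k / Tf k) ^ (N+1) :=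
    h1.trans (mul_le_mul_of_nonneg_right (le_abs_self _) hqnn)
  calc |u k - ∑ n ∈ Finset.range (N+1), (V.coeff n).eval (Mf k) * ((Tf k)⁻¹) ^ n|
      ≤ |u k - PE (Mf k) (Tf k) V|
        + |PE (Mf k) (Tf k) V - ∑ n ∈ Finset.range (N+1), (V.coeff n).eval (Mf k) * ((Tf k)⁻¹) ^ n| :=
        abs_sub_le _ _ _
    _ ≤ |C1| * (Mf k / Tf k) ^ (N+1) + BB V * (Mf k / Tf k) ^ (N+1) := add_le_add h1' htr
    _ ≤ (|C1| + BB V + 1) * (Mf k / Tf k) ^ (N+1) := by nlinarith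

noncomputable def Lf (k : ℝ) : ℝ := Real.log k

noncomputable def Sf (N : ℕ) (a : ℕ → ℝ) (k : ℝ) : ℝ :=
  ∑ n ∈ Finset.range (N+2), a n / (Lf k) ^ n

noncomputable def tauf (σ : ℝ) (N : ℕ) (a : ℕ → ℝ) (k : ℝ) : ℝ :=
  k ^ (1/σ - 1) / (σ * Lf k) * Sf N a k

noncomputable def Tff (σ : ℝ) (N : ℕ) (a : ℕ → ℝ) (k : ℝ) : ℝ := Real.log (tauf σ N a k)

noncomputable def Mff (σ : ℝ) (N : ℕ) (a : ℕ → ℝ) (k : ℝ) : ℝ := Real.log (Tff σ N a k)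

noncomputable def uff (σ : ℝ) (N : ℕ) (a : ℕ → ℝ) (k : ℝ) : ℝ := Lf k / Tff σ N a k

lemma concrete (σ : ℝ) (hσ : 1/2 < σ) (hσ1 : σ < 1) (N : ℕ) (a : ℕ → ℝ) (ha₀ : 0 < a 0) :
    ∃ b : ℕ → Polynomial ℝ, (∀ n, (b n).natDegree ≤ n) ∧ b 0 = C (σ/(1-σ)) ∧
      ∃ C > (0:ℝ), ∀ᶠ k in atTop,
        Tff σ N a k ≠ 0 ∧
        |uff σ N a k - ∑ n ∈ Finset.range (N+1),
            (b n).eval (Mff σ N a k) / (Tff σ N a k) ^ n|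
          ≤ C * (Mff σ N a k / Tff σ N a k) ^ (N+1) := by
  have hσ0 : (0:ℝ) < σ := by linarith
  set α : ℝ := 1/σ - 1 with hα_def
  have hα : 0 < α := by
    rw [hα_def, sub_pos, lt_div_iff₀ hσ0, one_mul]
    exact hσ1
  have hαinv : α⁻¹ = σ / (1 - σ) := by
    rw [hα_def, show (1/σ - 1 : ℝ) = (1 - σ)/σ by field_simp, inv_div]
  -- basic limits
  have hL : Tendsto Lf atTop atTop := Real.tendsto_log_atTop
  have hS : Tendsto (Sf N a) atTop (𝓝 (a 0)) := by
    have h1 : ∀ n ∈ Finset.range (N+2), Tendsto (fun k => a n / (Lf k) ^ n) atTop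
        (𝓝 (if n = 0 then a 0 else 0)) := by
      intro n _
      rcases Nat.eq_zero_or_pos n with h | h
      · subst h
        simpa [pow_zero] using (tendsto_const_nhds : Tendsto (fun _ : ℝ => a 0) atTop _)
      · rw [if_neg h.ne']
        exact tendsto_const_nhds.div_atTop ((tendsto_pow_atTop h.ne').comp hL)
    have h2 := tendsto_finset_sum (Finset.range (N+2)) h1
    have h3 : ∑ n ∈ Finset.range (N+2), (if n = 0 then a 0 else 0) = a 0 := by
      rw [Finset.sum_ite_eq' (Finset.range (N+2)) 0 (fun _ => a 0)]
      simp
    rw [h3] at h2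
    exact h2.congr fun k => rfl
  have hSev : ∀ᶠ k in atTop, a 0 / 2 < Sf N a k :=
    hS.eventually (eventually_gt_nhds (by linarith))
  have hlogS : Tendsto (fun k => Real.log (Sf N a k)) atTop (𝓝 (Real.log (a 0))) :=
    ((Real.continuousAt_log ha₀.ne').tendsto).comp hS
  have hlogSb : ∀ᶠ k in atTop, |Real.log (Sf N a k)| ≤ |Real.log (a 0)| + 1 := by
    filter_upwards [Metric.tendsto_nhds.mp hlogS 1 one_pos] with k hk
    rw [Real.dist_eq] at hk
    have h2 := abs_sub_abs_le_abs_sub (Real.log (Sf N a k)) (Real.log (a 0))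
    linarith
  have hTeq : ∀ᶠ k in atTop, Tff σ N a k
      = α * Lf k - Real.log σ - Real.log (Lf k) + Real.log (Sf N a k) := by
    filter_upwards [hL.eventually_gt_atTop 0, eventually_gt_atTop (0:ℝ), hSev] with k hk1 hk0 hkS
    have hA : (0:ℝ) < k ^ (1/σ - 1) := rpow_pos_of_pos hk0 _
    have hB : 0 < σ * Lf k := mul_pos hσ0 hk1
    have hSk : 0 < Sf N a k := by linarith
    simp only [Tff, tauf]
    rw [Real.log_mul (div_ne_zero hA.ne' hB.ne') hSk.ne',
      Real.log_div hA.ne' hB.ne', Real.log_rpow hk0, Real.log_mul hσ0.ne' hk1.ne']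
    simp only [Lf, hα_def]
    ring
  have hlogdiv : Tendsto (fun k => Real.log (Lf k) / Lf k) atTop (𝓝 0) := by
    have h := Real.isLittleO_log_id_atTop.tendsto_div_nhds_zero
    exact h.comp hL
  have hTL : Tendsto (fun k => Tff σ N a k / Lf k) atTop (𝓝 α) := by
    have h1 : Tendsto (fun k => α - Real.log σ / Lf k - Real.log (Lf k) / Lf k
        + Real.log (Sf N a k) / Lf k) atTop (𝓝 (α - 0 - 0 + 0)) :=
      ((tendsto_const_nhds.sub (tendsto_const_nhds.div_atTop hL)).sub hlogdiv).add
        (hlogS.div_atTop hL)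
    rw [sub_zero, sub_zero, add_zero] at h1
    refine h1.congr' ?_
    filter_upwards [hTeq, hL.eventually_gt_atTop 0] with k hk hk1
    rw [hk]
    field_simp
  have hT : Tendsto (Tff σ N a) atTop atTop := by
    have h2 : Tendsto (fun k => Lf k * (Tff σ N a k / Lf k)) atTop atTop :=
      hL.atTop_mul_pos hα hTL
    refine h2.congr' ?_
    filter_upwards [hL.eventually_gt_atTop 0] with k hk
    rw [mul_comm, div_mul_cancel₀ _ hk.ne']
  have hM : Tendsto (Mff σ N a) atTop atTop := Real.tendsto_log_atTop.comp hT
  have hMT : ∀ᶠ k in atTop, 1 ≤ Mff σ N a k ∧ Mff σ N a k ≤ Tff σ N a k := by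
    filter_upwards [hM.eventually_ge_atTop 1, hT.eventually_ge_atTop 0] with k h1 h2
    exact ⟨h1, Real.log_le_self h2⟩
  have hq0 : Tendsto (fun k => Mff σ N a k / Tff σ N a k) atTop (𝓝 0) := by
    have h := Real.isLittleO_log_id_atTop.tendsto_div_nhds_zero
    exact h.comp hT
  -- quantitative bound on u - α⁻¹
  set c₁ : ℝ := |Real.log σ| + (|Real.log (a 0)| + 1) + |Real.log (α/2)| with hc₁_def
  have hc₁0 : 0 ≤ c₁ := by positivity
  have hu : ∀ᶠ k in atTop, |uff σ N a k - α⁻¹|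
      ≤ ((c₁ + 1) * α⁻¹) * (Mff σ N a k / Tff σ N a k) := by
    filter_upwards [hTeq, hL.eventually_ge_atTop 1, hT.eventually_gt_atTop 0,
      hTL.eventually (eventually_ge_nhds (half_lt_self hα)), hlogSb,
      hM.eventually_ge_atTop 1] with k hk hk1 hkT hkTL hkS hkM
    have hLpos : 0 < Lf k := lt_of_lt_of_le one_pos hk1
    have hlogL0 : 0 ≤ Real.log (Lf k) := Real.log_nonneg hk1
    have hTTL : α/2 * Lf k ≤ Tff σ N a k := by
      rw [← le_div_iff₀ hLpos]
      exact hkTL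
    have hlogL : Real.log (Lf k) ≤ Mff σ N a k + |Real.log (α/2)| := by
      have h1 : Real.log (α/2 * Lf k) ≤ Real.log (Tff σ N a k) :=
        Real.log_le_log (mul_pos (half_pos hα) hLpos) hTTL
      rw [Real.log_mul (by positivity : (α/2 : ℝ) ≠ 0) hLpos.ne'] at h1
      have h2 : -|Real.log (α/2)| ≤ Real.log (α/2) := neg_abs_le _
      have h3 : Real.log (Tff σ N a k) = Mff σ N a k := rfl
      linarith
    have e1 : uff σ N a k - α⁻¹ = (α * Lf k - Tff σ N a k) / (α * Tff σ N a k) := by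
      rw [uff]
      field_simp
    have e2 : α * Lf k - Tff σ N a k
        = Real.log σ + Real.log (Lf k) - Real.log (Sf N a k) := by
      rw [hk]; ring
    have hnum : |α * Lf k - Tff σ N a k| ≤ (c₁ + 1) * Mff σ N a k := by
      rw [e2]
      have a1 : |Real.log σ + Real.log (Lf k) - Real.log (Sf N a k)|
          ≤ |Real.log σ + Real.log (Lf k)| + |Real.log (Sf N a k)| := by
        calc |Real.log σ + Real.log (Lf k) - Real.log (Sf N a k)|
            = |Real.log σ + Real.log (Lf k) + -(Real.log (Sf N a k))| := by
              rw [sub_eq_add_neg]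
          _ ≤ |Real.log σ + Real.log (Lf k)| + |-(Real.log (Sf N a k))| := abs_add_le _ _
          _ = |Real.log σ + Real.log (Lf k)| + |Real.log (Sf N a k)| := by rw [abs_neg]
      have a2 : |Real.log σ + Real.log (Lf k)| ≤ |Real.log σ| + Real.log (Lf k) := by
        refine (abs_add_le _ _).trans ?_
        rw [abs_of_nonneg hlogL0]
      have a3 : (1:ℝ) ≤ Mff σ N a k := hkM
      have a4 : c₁ + Mff σ N a k ≤ (c₁ + 1) * Mff σ N a k := by
        nlinarith [mul_nonneg hc₁0 (sub_nonneg.mpr a3)]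
      have t5 : |Real.log σ + Real.log (Lf k) - Real.log (Sf N a k)| ≤ c₁ + Mff σ N a k := by
        rw [hc₁_def]
        linarith [a1, a2, hkS, hlogL]
      linarith [t5, a4]
    calc |uff σ N a k - α⁻¹| = |α * Lf k - Tff σ N a k| / (α * Tff σ N a k) := by
          rw [e1, abs_div, abs_of_pos (mul_pos hα hkT)]
      _ ≤ ((c₁ + 1) * Mff σ N a k) / (α * Tff σ N a k) := by
          gcongr
      _ = ((c₁ + 1) * α⁻¹) * (Mff σ N a k / Tff σ N a k) := by
          field_simp
  have heq : ∀ᶠ k in atTop, uff σ N a k = α⁻¹ + (α * Tff σ N a k)⁻¹ *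
      (Mff σ N a k + Real.log σ + Real.log (uff σ N a k) -
        Real.log (∑ n ∈ Finset.range (N+2), a n * ((uff σ N a k * Tff σ N a k)⁻¹) ^ n)) := by
    filter_upwards [hTeq, hL.eventually_gt_atTop 1, hT.eventually_gt_atTop 0] with k hk hk1 hkT
    have hLpos : (0:ℝ) < Lf k := by linarith
    have hufT : uff σ N a k * Tff σ N a k = Lf k := by
      simp only [uff]
      exact div_mul_cancel₀ _ hkT.ne'
    have hufpos : 0 < uff σ N a k := div_pos hLpos hkT
    have hsum : ∑ n ∈ Finset.range (N+2), a n * ((uff σ N a k * Tff σ N a k)⁻¹) ^ n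
        = Sf N a k := by
      rw [hufT]
      simp only [Sf]
      refine Finset.sum_congr rfl fun n _ => ?_
      rw [inv_pow, ← div_eq_mul_inv]
    rw [hsum]
    have hlogL : Real.log (Lf k) = Real.log (uff σ N a k) + Mff σ N a k := by
      rw [← hufT, Real.log_mul hufpos.ne' hkT.ne']
      rfl
    set E := Mff σ N a k + Real.log σ + Real.log (uff σ N a k) - Real.log (Sf N a k) with hE
    have h2 : α * Lf k = Tff σ N a k + E := by
      rw [hE]
      linarith [hk, hlogL]
    have key : uff σ N a k = (Tff σ N a k + E) / (α * Tff σ N a k) := by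
      rw [eq_div_iff (mul_pos hα hkT).ne']
      calc uff σ N a k * (α * Tff σ N a k) = α * (uff σ N a k * Tff σ N a k) := by ring
        _ = α * Lf k := by rw [hufT]
        _ = Tff σ N a k + E := h2
    have final : α⁻¹ + (α * Tff σ N a k)⁻¹ * E = (Tff σ N a k + E) / (α * Tff σ N a k) := by
      field_simp
    rw [final]
    exact key
  obtain ⟨b, hdeg, hb0, C, hC0, hev⟩ := main_abstract hα N ha₀ hMT hq0 hT hu heq
  refine ⟨b, hdeg, by rw [hb0, hαinv], C, hC0, ?_⟩
  filter_upwards [hev, hT.eventually_gt_atTop 0] with k h1 h2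
  exact ⟨h2.ne', h1⟩
end Stmt17


theorem stmt17 (σ : ℝ) (hσ : 1/2 < σ) (hσ1 : σ < 1) (N : ℕ)
    (a : ℕ → ℝ) (ha₀ : 0 < a 0) :
    ∃ b : ℕ → Polynomial ℝ,
      (∀ n, n ≤ N → (b n).natDegree ≤ n) ∧
      b 0 = Polynomial.C (σ / (1-σ)) ∧
      ∃ C > (0:ℝ), ∃ k₀ : ℝ, ∀ k τ : ℝ, k₀ ≤ k → 0 < τ →
        τ = k ^ (1/σ - 1) / (σ * Real.log k)
              * ∑ n ∈ Finset.range (N+2), a n / (Real.log k) ^ n →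
        ∃ E : ℝ,
          |E| ≤ C * (Real.log (Real.log τ) / Real.log τ) ^ (N+1) ∧
          Real.log k = Real.log τ *
            (∑ n ∈ Finset.range (N+1),
                (b n).eval (Real.log (Real.log τ)) / (Real.log τ) ^ n + E) := by
  obtain ⟨b, hdeg, hb0, C, hC0, hev⟩ := Stmt17.concrete σ hσ hσ1 N a ha₀
  rw [Filter.eventually_atTop] at hev
  obtain ⟨k₀, hk₀⟩ := hev
  refine ⟨b, fun n _ => hdeg n, hb0, C, hC0, k₀, ?_⟩
  intro k τ hk hτpos hτeq
  obtain ⟨hT0, hbound⟩ := hk₀ k hk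
  have hτt : τ = Stmt17.tauf σ N a k := hτeq
  refine ⟨Real.log k / Real.log τ - ∑ n ∈ Finset.range (N+1),
    (b n).eval (Real.log (Real.log τ)) / (Real.log τ) ^ n, ?_, ?_⟩
  · rw [hτt]
    exact hbound
  · rw [hτt]
    have hstep : (∑ n ∈ Finset.range (N+1),
        (b n).eval (Real.log (Real.log (Stmt17.tauf σ N a k))) / Real.log (Stmt17.tauf σ N a k) ^ n)
        + (Real.log k / Real.log (Stmt17.tauf σ N a k) - ∑ n ∈ Finset.range (N+1),
        (b n).eval (Real.log (Real.log (Stmt17.tauf σ N a k))) / Real.log (Stmt17.tauf σ N a k) ^ n)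
        = Real.log k / Real.log (Stmt17.tauf σ N a k) := by ring
    rw [hstep, mul_comm]
    exact (div_mul_cancel₀ _ hT0).symm
end
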